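/- In the quiver with potential of the canonical triangulation of the once-punctured torus, every path of length at least 7 lies in the Jacobian ideal J(S); consequently the Jacobian algebra P(Q,S) is spanned by the residues of paths of length at most 6. -/

import Mathlib

set_option synthInstance.maxHeartbeats 400000
set_option maxHeartbeats 1600000

namespace QPF

/-! ### Quivers and path data

A quiver is a finite directed multigraph.  A *path datum* is a pair `(i, l)` of a base
vertex `i` and a list of arrows `l` (traversed left to right); it is *well-formed* (`WF`)
if consecutive arrows compose and the first arrow starts at `i`.  Well-formed path data
are exactly the paths of the quiver (the empty list encoding the trivial path at `i`). -/

structure Quiv (V : Type) : Type 1 where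
  E : Type
  s : E → V
  t : E → V

variable {V : Type}

namespace Quiv

abbrev Pth (Q : Quiv V) : Type := V × List Q.E

variable {Q : Quiv V}

def WF (Q : Quiv V) (p : Q.Pth) : Prop :=
  List.Chain' (fun e f => Q.t e = Q.s f) p.2 ∧ ∀ e ∈ p.2.head?, Q.s e = p.1

def endV (Q : Quiv V) (p : Q.Pth) : V :=
  p.2.getLast?.elim p.1 Q.t

/-- cyclic paths of positive length -/
def IsCycle (Q : Quiv V) (p : Q.Pth) : Prop := Q.WF p ∧ Q.endV p = p.1 ∧ p.2 ≠ []

/-- the list of vertices visited by a path datum -/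
def visits (Q : Quiv V) (p : Q.Pth) : List V := p.1 :: p.2.map Q.t

theorem wf_nil (Q : Quiv V) (i : V) : Q.WF (i, ([] : List Q.E)) := ⟨List.IsChain.nil, by simp⟩

theorem wf_arrow (Q : Quiv V) (e : Q.E) : Q.WF (Q.s e, [e]) :=
  ⟨List.isChain_singleton e, by simp⟩

@[simp] theorem endV_nil (i : V) : Q.endV (i, ([] : List Q.E)) = i := rfl

@[simp] theorem endV_cons (i : V) (e : Q.E) (l : List Q.E) :
    Q.endV (i, e :: l) = Q.endV (Q.t e, l) := by
  cases l with
  | nil => rfl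
  | cons f l =>
      cases h : (f :: l).getLast? with
      | none => simp at h
      | some x => simp [Quiv.endV, List.getLast?_cons_cons, h]

theorem endV_append (i : V) (a b : List Q.E) :
    Q.endV (i, a ++ b) = Q.endV (Q.endV (i, a), b) := by
  cases h : b.getLast? <;> simp [Quiv.endV, List.getLast?_append, h]

theorem WF.append {i : V} {a b : List Q.E}
    (ha : Q.WF (i, a)) (hb : Q.WF (Q.endV (i, a), b)) : Q.WF (i, a ++ b) := by
  constructor
  · rw [List.Chain', List.isChain_append]
    refine ⟨ha.1, hb.1, ?_⟩
    intro x hx y hy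
    have h1 := hb.2 y hy
    rw [show Q.endV (i, a) = Q.t x by simp [Quiv.endV, Option.mem_def.mp hx]] at h1
    exact h1.symm
  · intro e he
    cases a with
    | nil => exact hb.2 e (by simpa using he)
    | cons f a' =>
        have hef : f = e := by simpa using he
        subst hef
        exact ha.2 f (by simp)

end Quiv

/-! ### The complete path algebra

`Series K Q` is the space of all (possibly infinite) `K`-linear combinations of path data
of `Q`, i.e. arbitrary functions `Q.Pth → K`, with the convolution product.  The complete
path algebra `R⟨⟨Q⟩⟩` is the subalgebra `pathAlg K Q` of series supported on well-formed
path data. -/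

def Series (K : Type) {V : Type} (Q : Quiv V) : Type := Q.Pth → K

namespace Series

variable {K : Type} [Field K] {Q : Quiv V}

instance : AddCommGroup (Series K Q) := inferInstanceAs (AddCommGroup (Q.Pth → K))
instance : Module K (Series K Q) := inferInstanceAs (Module K (Q.Pth → K))

@[simp] theorem add_apply (u v : Series K Q) (p : Q.Pth) : (u + v) p = u p + v p := rfl
@[simp] theorem sub_apply (u v : Series K Q) (p : Q.Pth) : (u - v) p = u p - v p := rfl
@[simp] theorem neg_apply (u : Series K Q) (p : Q.Pth) : (-u) p = -(u p) := rfl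
@[simp] theorem smul_apply (c : K) (u : Series K Q) (p : Q.Pth) : (c • u) p = c * u p := rfl
@[simp] theorem zero_apply (p : Q.Pth) : (0 : Series K Q) p = 0 := rfl

/-- all decompositions of a list into a prefix and a suffix -/
def splits {α : Type} (l : List α) : List (List α × List α) := l.inits.zip l.tails

theorem splits_nil {α : Type} : splits ([] : List α) = [([], [])] := rfl

theorem splits_cons {α : Type} (e : α) (l : List α) :
    splits (e :: l) = ([], e :: l) :: (splits l).map (fun q => (e :: q.1, q.2)) := by
  unfold splits
  rw [List.inits_cons, List.tails_cons, List.zip_cons_cons, List.zip_map_left]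
  rfl

theorem mem_splits {α : Type} {l : List α} {q : List α × List α} (h : q ∈ splits l) :
    q.1 ++ q.2 = l := by
  induction l generalizing q with
  | nil => simp only [splits_nil, List.mem_singleton] at h; subst h; rfl
  | cons e l ih =>
      rw [splits_cons, List.mem_cons] at h
      rcases h with h | h
      · subst h; rfl
      · obtain ⟨r, hr, rfl⟩ := List.mem_map.mp h
        simpa using congrArg (e :: ·) (ih hr)

section SumLemmas

variable {α : Type}

theorem lsum_add (l : List α) (f g : α → K) :
    (l.map fun x => f x + g x).sum = (l.map f).sum + (l.map g).sum := by
  induction l with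
  | nil => simp
  | cons a l ih => simp [ih]; ring

theorem lsum_mul_right (l : List α) (f : α → K) (c : K) :
    (l.map fun x => f x * c).sum = (l.map f).sum * c := by
  induction l with
  | nil => simp
  | cons a l ih => simp [ih]; ring

theorem lsum_mul_left (l : List α) (f : α → K) (c : K) :
    (l.map fun x => c * f x).sum = c * (l.map f).sum := by
  induction l with
  | nil => simp
  | cons a l ih => simp [ih]; ring

end SumLemmas

/-- the convolution product on series -/
protected def mul (u v : Series K Q) : Series K Q := fun p =>
  ((splits p.2).map fun q => u (p.1, q.1) * v (Q.endV (p.1, q.1), q.2)).sum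

/-- the identity: the sum of all trivial paths -/
protected def one : Series K Q := fun p => match p.2 with | [] => 1 | _ => 0

theorem one_def_nil (i : V) : (Series.one : Series K Q) (i, []) = 1 := rfl
theorem one_def_cons (i : V) (e : Q.E) (l : List Q.E) :
    (Series.one : Series K Q) (i, e :: l) = 0 := rfl

/-- key rearrangement: summing over two-step splittings in either order agrees -/
theorem splits_splits_sum {α : Type} (l : List α) (F : List α → List α → List α → K) :
    ((splits l).map fun q => ((splits q.1).map fun r => F r.1 r.2 q.2).sum).sum
      = ((splits l).map fun q => ((splits q.2).map fun r => F q.1 r.1 r.2).sum).sum := by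
  induction l generalizing F with
  | nil => simp [splits_nil]
  | cons e l ih =>
      conv_lhs => rw [splits_cons]
      conv_rhs => rw [splits_cons]
      simp only [List.map_cons, List.sum_cons, List.map_map, Function.comp_def]
      have hL : ∀ q ∈ splits l,
          ((splits (e :: q.1)).map fun r => F r.1 r.2 q.2).sum
            = F [] (e :: q.1) q.2 + ((splits q.1).map fun r => F (e :: r.1) r.2 q.2).sum := by
        intro q _
        rw [splits_cons]
        simp [List.map_map, Function.comp_def]
      rw [List.map_congr_left hL, lsum_add]
      rw [splits_cons]
      simp only [List.map_cons, List.sum_cons, List.map_map, Function.comp_def]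
      rw [ih (fun a b c => F (e :: a) b c)]
      simp [splits_nil]
      ring

theorem mul_assoc' (u v w : Series K Q) :
    Series.mul (Series.mul u v) w = Series.mul u (Series.mul v w) := by
  funext p
  obtain ⟨i, l⟩ := p
  show ((splits l).map fun q =>
          (Series.mul u v) (i, q.1) * w (Q.endV (i, q.1), q.2)).sum
      = ((splits l).map fun q =>
          u (i, q.1) * (Series.mul v w) (Q.endV (i, q.1), q.2)).sum
  have hL : ∀ q ∈ splits l,
      (Series.mul u v) (i, q.1) * w (Q.endV (i, q.1), q.2)
        = ((splits q.1).map fun r =>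
            u (i, r.1) * v (Q.endV (i, r.1), r.2) * w (Q.endV (i, r.1 ++ r.2), q.2)).sum := by
    intro q hq
    show (((splits q.1)).map fun r => u (i, r.1) * v (Q.endV (i, r.1), r.2)).sum
          * w (Q.endV (i, q.1), q.2) = _
    rw [← lsum_mul_right]
    refine congrArg List.sum (List.map_congr_left ?_)
    intro r hr
    rw [show (r.1 ++ r.2 : List Q.E) = q.1 from mem_splits hr]
  have hR : ∀ q ∈ splits l,
      u (i, q.1) * (Series.mul v w) (Q.endV (i, q.1), q.2)
        = ((splits q.2).map fun r =>
            u (i, q.1) * v (Q.endV (i, q.1), r.1) * w (Q.endV (i, q.1 ++ r.1), r.2)).sum := by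
    intro q hq
    show u (i, q.1) * (((splits q.2)).map fun r =>
            v (Q.endV (i, q.1), r.1) * w (Q.endV (Q.endV (i, q.1), r.1), r.2)).sum = _
    rw [← lsum_mul_left]
    refine congrArg List.sum (List.map_congr_left ?_)
    intro r hr
    rw [Quiv.endV_append, mul_assoc]
  rw [List.map_congr_left hL, List.map_congr_left hR]
  exact splits_splits_sum l
    (fun a b c => u (i, a) * v (Q.endV (i, a), b) * w (Q.endV (i, a ++ b), c))

theorem one_mul' (u : Series K Q) : Series.mul Series.one u = u := by
  funext p
  obtain ⟨i, l⟩ := p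
  cases l with
  | nil => show Series.one (i, []) * u (Q.endV (i, ([] : List Q.E)), []) + 0 = u (i, [])
           simp [Series.one]
  | cons e l =>
      show ((splits (e :: l)).map fun q =>
        Series.one (i, q.1) * u (Q.endV (i, q.1), q.2)).sum = u (i, e :: l)
      rw [splits_cons]
      simp only [List.map_cons, List.sum_cons, List.map_map, Function.comp_def]
      have : ∀ q ∈ splits l,
          Series.one (i, e :: q.1) * u (Q.endV (i, e :: q.1), q.2) = 0 := by
        intro q _
        show (0 : K) * _ = 0
        exact zero_mul _
      rw [List.map_congr_left this]
      simp [Series.one]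

theorem mul_one' (u : Series K Q) : Series.mul u Series.one = u := by
  suffices h : ∀ (l : List Q.E) (i : V) (u : Series K Q),
      Series.mul u Series.one (i, l) = u (i, l) by
    funext p; exact h p.2 p.1 u
  intro l
  induction l with
  | nil =>
      intro i u
      show u (i, []) * Series.one (Q.endV (i, ([] : List Q.E)), []) + 0 = u (i, [])
      simp [Series.one]
  | cons e l ih =>
      intro i u
      show ((splits (e :: l)).map fun q =>
        u (i, q.1) * Series.one (Q.endV (i, q.1), q.2)).sum = u (i, e :: l)
      rw [splits_cons]
      simp only [List.map_cons, List.sum_cons, List.map_map, Function.comp_def]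
      have h0 : u (i, ([] : List Q.E)) * Series.one (Q.endV (i, ([] : List Q.E)), e :: l) = 0 := by
        show _ * (0 : K) = 0; exact mul_zero _
      have hrest : ∀ q ∈ splits l,
          u (i, e :: q.1) * Series.one (Q.endV (i, e :: q.1), q.2)
            = (fun pr : Q.Pth => u (i, e :: pr.2)) (Q.t e, q.1)
              * Series.one (Q.endV (Q.t e, q.1), q.2) := by
        intro q _
        rw [Quiv.endV_cons]
      rw [h0, List.map_congr_left hrest, zero_add]
      have := ih (Q.t e) (fun pr : Q.Pth => u (i, e :: pr.2))
      exact this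

theorem left_distrib' (u v w : Series K Q) :
    Series.mul u (v + w) = Series.mul u v + Series.mul u w := by
  funext p
  show ((splits p.2).map fun q =>
      u (p.1, q.1) * (v (Q.endV (p.1, q.1), q.2) + w (Q.endV (p.1, q.1), q.2))).sum = _ + _
  rw [show (fun q : List Q.E × List Q.E =>
      u (p.1, q.1) * (v (Q.endV (p.1, q.1), q.2) + w (Q.endV (p.1, q.1), q.2)))
      = fun q => u (p.1, q.1) * v (Q.endV (p.1, q.1), q.2)
          + u (p.1, q.1) * w (Q.endV (p.1, q.1), q.2) from funext fun q => by ring]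
  rw [lsum_add]
  rfl

theorem right_distrib' (u v w : Series K Q) :
    Series.mul (u + v) w = Series.mul u w + Series.mul v w := by
  funext p
  show ((splits p.2).map fun q =>
      (u (p.1, q.1) + v (p.1, q.1)) * w (Q.endV (p.1, q.1), q.2)).sum = _ + _
  rw [show (fun q : List Q.E × List Q.E =>
      (u (p.1, q.1) + v (p.1, q.1)) * w (Q.endV (p.1, q.1), q.2))
      = fun q => u (p.1, q.1) * w (Q.endV (p.1, q.1), q.2)
          + v (p.1, q.1) * w (Q.endV (p.1, q.1), q.2) from funext fun q => by ring]
  rw [lsum_add]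
  rfl

theorem zero_mul' (u : Series K Q) : Series.mul 0 u = 0 := by
  funext p
  show ((splits p.2).map fun q => (0 : K) * u (Q.endV (p.1, q.1), q.2)).sum = 0
  refine List.sum_eq_zero ?_
  intro x hx
  obtain ⟨q, _, rfl⟩ := List.mem_map.mp hx
  exact zero_mul _

theorem mul_zero' (u : Series K Q) : Series.mul u 0 = 0 := by
  funext p
  show ((splits p.2).map fun q => u (p.1, q.1) * (0 : K)).sum = 0
  refine List.sum_eq_zero ?_
  intro x hx
  obtain ⟨q, _, rfl⟩ := List.mem_map.mp hx
  exact mul_zero _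

instance instRing : Ring (Series K Q) :=
  { (inferInstance : AddCommGroup (Series K Q)) with
    mul := Series.mul
    one := Series.one
    mul_assoc := mul_assoc'
    one_mul := one_mul'
    mul_one := mul_one'
    left_distrib := left_distrib'
    right_distrib := right_distrib'
    zero_mul := zero_mul'
    mul_zero := mul_zero' }

@[simp] theorem mul_apply (u v : Series K Q) (p : Q.Pth) :
    (u * v) p = ((splits p.2).map fun q =>
      u (p.1, q.1) * v (Q.endV (p.1, q.1), q.2)).sum := rfl

@[simp] theorem one_apply_nil (i : V) : (1 : Series K Q) (i, []) = 1 := rfl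
@[simp] theorem one_apply_cons (i : V) (e : Q.E) (l : List Q.E) :
    (1 : Series K Q) (i, e :: l) = 0 := rfl

instance instAlgebra : Algebra K (Series K Q) := by
  refine Algebra.ofModule ?_ ?_
  · intro c u v
    funext p
    show ((splits p.2).map fun q => (c * u (p.1, q.1)) * v (Q.endV (p.1, q.1), q.2)).sum
        = c * ((splits p.2).map fun q => u (p.1, q.1) * v (Q.endV (p.1, q.1), q.2)).sum
    rw [← lsum_mul_left]
    exact congrArg List.sum (List.map_congr_left fun q _ => by ring)
  · intro c u v
    funext p
    show ((splits p.2).map fun q => u (p.1, q.1) * (c * v (Q.endV (p.1, q.1), q.2))).sum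
        = c * ((splits p.2).map fun q => u (p.1, q.1) * v (Q.endV (p.1, q.1), q.2)).sum
    rw [← lsum_mul_left]
    exact congrArg List.sum (List.map_congr_left fun q _ => by ring)

end Series

section PathAlg

variable {K : Type} [Field K] {Q : Quiv V}

open Series

/-- The complete path algebra `R⟨⟨Q⟩⟩`: series supported on well-formed path data. -/
def pathAlg (K : Type) [Field K] (Q : Quiv V) : Subalgebra K (Series K Q) :=
  { carrier := {u | ∀ p : Q.Pth, ¬ Q.WF p → u p = 0}
    add_mem' := fun {u v} hu hv p hp => by
      simp only [Set.mem_setOf_eq] at hu hv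
      show u p + v p = 0
      rw [hu p hp, hv p hp, add_zero]
    zero_mem' := fun p _ => rfl
    one_mem' := fun p hp => by
      obtain ⟨i, l⟩ := p
      cases l with
      | nil => exact absurd (Quiv.wf_nil Q i) hp
      | cons e l => rfl
    mul_mem' := fun {u v} hu hv p hp => by
      simp only [Set.mem_setOf_eq] at hu hv
      show ((splits p.2).map fun q =>
        u (p.1, q.1) * v (Q.endV (p.1, q.1), q.2)).sum = 0
      refine List.sum_eq_zero ?_
      intro x hx
      obtain ⟨q, hq, rfl⟩ := List.mem_map.mp hx
      by_cases h1 : Q.WF (p.1, q.1)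
      · by_cases h2 : Q.WF (Q.endV (p.1, q.1), q.2)
        · exact absurd (by
            have := Quiv.WF.append h1 h2
            rwa [mem_splits hq] at this) hp
        · rw [hv _ h2, mul_zero]
      · rw [hu _ h1, zero_mul]
    algebraMap_mem' := fun c p hp => by
      rw [Algebra.algebraMap_eq_smul_one]
      show c * (1 : Series K Q) p = 0
      obtain ⟨i, l⟩ := p
      cases l with
      | nil => exact absurd (Quiv.wf_nil Q i) hp
      | cons e l => show c * 0 = 0; rw [mul_zero] }

theorem mem_pathAlg_iff {u : Series K Q} :
    u ∈ pathAlg K Q ↔ ∀ p : Q.Pth, ¬ Q.WF p → u p = 0 := Iff.rfl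

open Classical in
/-- the characteristic series of a single path datum -/
noncomputable def unitS (p : Q.Pth) : Series K Q := fun q => if q = p then 1 else 0

theorem unitS_mem {p : Q.Pth} (hp : Q.WF p) : (unitS p : Series K Q) ∈ pathAlg K Q := by
  intro q hq
  unfold unitS
  split
  · next h => subst h; exact absurd hp hq
  · rfl

/-- the idempotent of a vertex, i.e. the trivial path at `i` -/
noncomputable def vtxS (i : V) : Series K Q := unitS (i, [])

theorem vtxS_mem (i : V) : (vtxS i : Series K Q) ∈ pathAlg K Q :=
  unitS_mem (Quiv.wf_nil Q i)

/-- the trivial path at `i` as an element of the complete path algebra -/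
noncomputable def vtxPA (K : Type) [Field K] (Q : Quiv V) (i : V) : pathAlg K Q :=
  ⟨vtxS i, vtxS_mem i⟩

/-- the path `p` as an element of the complete path algebra -/
noncomputable def unitPA {p : Q.Pth} (hp : Q.WF p) : pathAlg K Q :=
  ⟨unitS p, unitS_mem hp⟩

/-- the arrow `e` as an element of the complete path algebra -/
noncomputable def arrowPA (K : Type) [Field K] (Q : Quiv V) (e : Q.E) : pathAlg K Q :=
  unitPA (Quiv.wf_arrow Q e)

/-- A potential: a series all of whose terms are cyclic paths of positive length. -/
def IsPotential (S : Series K Q) : Prop := ∀ p : Q.Pth, S p ≠ 0 → Q.IsCycle p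

/-- `q` is obtained from the cyclic path `p` by a rotation -/
def RotOf (Q : Quiv V) (p q : Q.Pth) : Prop :=
  ∃ a b : List Q.E, p.2 = a ++ b ∧ q = (Q.endV (p.1, a), b ++ a)

/-- A quiver with potential `(Q, S)`: `S` is a potential no two of whose terms
are cyclically equivalent paths. -/
def IsQP (S : Series K Q) : Prop :=
  IsPotential S ∧ ∀ p q : Q.Pth, S p ≠ 0 → S q ≠ 0 → p ≠ q → ¬ RotOf Q p q

/-- Closure in the `m`-adic topology (`m` = ideal generated by the arrows):
`u` lies in `madicClosure T` iff for every `n` it agrees with some element of `T`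
on all paths of length `< n`. -/
def madicClosure (T : Set (Series K Q)) : Set (Series K Q) :=
  {u | ∀ n : ℕ, ∃ v ∈ T, ∀ p : Q.Pth, p.2.length < n → u p = v p}

/-- the set of differences `c - c'` where `c'` is a rotation of the cyclic path `c` -/
def rotDiffSet (K : Type) [Field K] (Q : Quiv V) : Set (Series K Q) :=
  {u | ∃ (i : V) (a b : List Q.E), Q.IsCycle (i, a ++ b) ∧
    u = unitS (i, a ++ b) - unitS (Q.endV (i, a), b ++ a)}

/-- Cyclic equivalence of potentials: the difference lies in the closure of the span of
all differences `a₁⋯a_d - a₂⋯a_d a₁`. -/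
def CyclicEquiv (S S' : Series K Q) : Prop :=
  S - S' ∈ madicClosure ↑(Submodule.span K (rotDiffSet K Q))

/-- A right-equivalence between the QPs `(Q, S)` and `(Q', S')` on the same vertex set:
an algebra isomorphism of the complete path algebras fixing the vertex idempotents and
sending `S` to a potential cyclically equivalent to `S'`. -/
structure QPEquiv (Q Q' : Quiv V) (S : pathAlg K Q) (S' : pathAlg K Q') where
  φ : pathAlg K Q ≃ₐ[K] pathAlg K Q'
  fix : ∀ i : V, φ (vtxPA K Q i) = vtxPA K Q' i
  cyc : CyclicEquiv ((φ S : pathAlg K Q') : Series K Q') (S' : Series K Q')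

end PathAlg

/-! ### Cyclic derivatives and Jacobian ideals -/

section Jacobian

variable {K : Type} [Field K] {Q : Quiv V}

open Series

open Classical in
/-- The cyclic derivative `∂ₑ(S)` of a potential `S` with respect to the arrow `e`:
for a cyclic path `c = q ++ [e] ++ r` it contributes the rotated path `r ++ q` (running
from `Q.t e` to `Q.s e`).  (For a potential `S` the result is automatically supported on
well-formed paths, which is built into the formula.) -/
noncomputable def cycDeriv (S : Series K Q) (e : Q.E) : Series K Q := fun p =>
  if Q.WF p ∧ p.1 = Q.t e then
    ((splits p.2).map fun q => S (Q.endV (p.1, q.1), q.2 ++ e :: q.1)).sum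
  else 0

theorem cycDeriv_mem (S : Series K Q) (e : Q.E) : cycDeriv S e ∈ pathAlg K Q := by
  intro p hp
  unfold cycDeriv
  rw [if_neg (fun h => hp h.1)]

/-- the cyclic derivative as an element of the complete path algebra -/
noncomputable def cycDerivPA (S : pathAlg K Q) (e : Q.E) : pathAlg K Q :=
  ⟨cycDeriv (S : Series K Q) e, cycDeriv_mem _ e⟩

/-- the set of finite sums `∑ aᵢ * gᵢ * bᵢ` with `gᵢ ∈ T`: the two-sided ideal
generated by `T` in a (unital) ring -/
def twoSidedSpan {R : Type} [Ring R] (T : Set R) : Set R :=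
  {x | ∃ l : List (R × R × R), (∀ q ∈ l, q.2.1 ∈ T) ∧
    (l.map fun q => q.1 * q.2.1 * q.2.2).sum = x}

/-- closure in the `m`-adic topology, for subsets of the complete path algebra -/
def madicClosurePA (T : Set (pathAlg K Q)) : Set (pathAlg K Q) :=
  {u | ∀ n : ℕ, ∃ v ∈ T, ∀ p : Q.Pth, p.2.length < n →
    (u : Series K Q) p = (v : Series K Q) p}

/-- The Jacobian ideal `J(S)` (as a subset of the complete path algebra): the `m`-adic
closure of the two-sided ideal generated by the cyclic derivatives of `S`. -/
def jacobSet (S : pathAlg K Q) : Set (pathAlg K Q) :=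
  madicClosurePA (twoSidedSpan (Set.range (cycDerivPA S)))

end Jacobian

/-! ### Restriction -/

section Restriction

variable {K : Type} [Field K]

/-- The restriction `Q|_I` of the quiver `Q` to a subset `I` of its vertex set: the
vertex set is unchanged, and only the arrows with head and tail in `I` are kept. -/
def Quiv.restrict (Q : Quiv V) (I : Set V) : Quiv V where
  E := {e : Q.E // Q.s e ∈ I ∧ Q.t e ∈ I}
  s e := Q.s e.1
  t e := Q.t e.1

variable {Q : Quiv V} {I : Set V}

theorem pmap_subtype_val {alpha : Type} {P : alpha → Prop} (l : List alpha) (h : ∀ a ∈ l, P a) :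
    (l.pmap (fun a (ha : P a) => (⟨a, ha⟩ : Subtype P)) h).map Subtype.val = l := by
  induction l with
  | nil => rfl
  | cons a l ih => simp [ih]

theorem Quiv.wf_restrict {i : V} {l : List (Q.restrict I).E} :
    (Q.restrict I).WF (i, l) ↔ Q.WF (i, l.map Subtype.val) := by
  unfold Quiv.WF
  constructor
  · rintro ⟨h1, h2⟩
    refine ⟨(List.isChain_map _).mpr h1, ?_⟩
    intro e he
    erw [List.head?_map] at he
    obtain ⟨f, hf, rfl⟩ := Option.map_eq_some_iff.mp (Option.mem_def.mp he)
    exact h2 f hf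
  · rintro ⟨h1, h2⟩
    refine ⟨(List.isChain_map _).mp h1, ?_⟩
    intro e he
    refine h2 e.1 ?_
    erw [List.head?_map]
    exact Option.mem_def.mpr (Option.map_eq_some_iff.mpr ⟨e, Option.mem_def.mp he, rfl⟩)

/-- restriction `ρ_I` of a series: evaluate on the underlying path of `Q` -/
def resSeries (I : Set V) (u : Series K Q) : Series K (Q.restrict I) :=
  fun p => u (p.1, p.2.map Subtype.val)

theorem resSeries_mem {u : Series K Q} (hu : u ∈ pathAlg K Q) :
    resSeries I u ∈ pathAlg K (Q.restrict I) := by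
  intro p hp
  exact hu _ (fun h => hp (Quiv.wf_restrict.mpr h))

/-- restriction `ρ_I : R⟨⟨Q⟩⟩ → R⟨⟨Q|_I⟩⟩` on the complete path algebra -/
def resPA (I : Set V) (u : pathAlg K Q) : pathAlg K (Q.restrict I) :=
  ⟨resSeries I (u : Series K Q), resSeries_mem u.2⟩

open Classical in
/-- inclusion of `R⟨⟨Q|_I⟩⟩` into `R⟨⟨Q⟩⟩` (a series on the restricted quiver, viewed as
a series on `Q` supported on paths all of whose arrows have endpoints in `I`) -/
noncomputable def inclSeries (I : Set V) (u : Series K (Q.restrict I)) : Series K Q :=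
  fun p =>
    if h : ∀ e ∈ p.2, Q.s e ∈ I ∧ Q.t e ∈ I then
      u (p.1, p.2.pmap (fun e he => (⟨e, he⟩ : (Q.restrict I).E)) h)
    else 0

theorem inclSeries_mem {u : Series K (Q.restrict I)}
    (hu : u ∈ pathAlg K (Q.restrict I)) : inclSeries I u ∈ pathAlg K Q := by
  intro p hp
  unfold inclSeries
  split
  · next h =>
      refine hu _ ?_
      rw [Quiv.wf_restrict]
      have hmap : (p.2.pmap (fun e he => (⟨e, he⟩ : (Q.restrict I).E)) h).map Subtype.val
          = p.2 := pmap_subtype_val p.2 h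
      erw [hmap]
      exact fun hw => hp (by exact hw)
  · rfl

/-- inclusion on the complete path algebras -/
noncomputable def inclPA (I : Set V) (u : pathAlg K (Q.restrict I)) : pathAlg K Q :=
  ⟨inclSeries I (u : Series K (Q.restrict I)), inclSeries_mem u.2⟩

end Restriction

/-! ### Decorated representations

Every decorated representation of a QP `(Q, S)` (i.e. a finite-dimensional left module
over the Jacobian algebra `P(Q, S)` together with a finite-dimensional module over the
vertex span `R`) is prescribed by: finite-dimensional spaces `M i`, linear maps attached
to the arrows, nilpotency, and annihilation by the cyclic derivatives of `S`; together
with the decoration spaces `D i`.  We encode the arrow maps as endomorphisms of the total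
space `∀ i, M i` supported on the relevant coordinates. -/

section Reps

variable {K : Type} [Field K] [DecidableEq V]

/-- projection onto the `i`-th coordinate, as an endomorphism of `∀ j, M j` -/
def vproj {K : Type} [Field K] (M : V → Type) [∀ i, AddCommGroup (M i)]
    [∀ i, Module K (M i)] [DecidableEq V] (i : V) : (∀ j, M j) →ₗ[K] (∀ j, M j) :=
  (LinearMap.single K M i).comp (LinearMap.proj i)

/-- A representation-with-decoration datum for the quiver `Q`. -/
structure PreRep (K : Type) [Field K] {V : Type} [DecidableEq V] (Q : Quiv V) :
    Type 1 where
  M : V → Type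
  [acg : ∀ i, AddCommGroup (M i)]
  [mod : ∀ i, Module K (M i)]
  fd : ∀ i, FiniteDimensional K (M i)
  act : Q.E → ((∀ i, M i) →ₗ[K] (∀ i, M i))
  supp : ∀ e : Q.E,
    (vproj M (Q.t e)).comp ((act e).comp (vproj M (Q.s e))) = act e
  D : V → Type
  [acgD : ∀ i, AddCommGroup (D i)]
  [modD : ∀ i, Module K (D i)]
  fdD : ∀ i, FiniteDimensional K (D i)

attribute [instance] PreRep.acg PreRep.mod PreRep.acgD PreRep.modD

namespace PreRep

variable {Q : Quiv V} (N : PreRep K Q)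

/-- action of a list of arrows (applied left to right) -/
def listAct (l : List Q.E) : (∀ i, N.M i) →ₗ[K] (∀ i, N.M i) :=
  l.foldl (fun T e => (N.act e).comp T) LinearMap.id

/-- action of a path datum (project to the base vertex, then traverse the arrows) -/
def pAct (p : Q.Pth) : (∀ i, N.M i) →ₗ[K] (∀ i, N.M i) :=
  (N.listAct p.2).comp (vproj N.M p.1)

/-- the arrow `e`, as a map `M (s e) → M (t e)` -/
def actHom (e : Q.E) : N.M (Q.s e) →ₗ[K] N.M (Q.t e) :=
  (LinearMap.proj (Q.t e)).comp ((N.act e).comp (LinearMap.single K N.M (Q.s e)))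

/-- nilpotency: all sufficiently long paths act as zero -/
def Nilpotent : Prop := ∃ r : ℕ, ∀ l : List Q.E, r ≤ l.length → N.listAct l = 0

/-- `ActsAs N u T`: the (essentially finite) sum `∑_p u p • pAct p` is defined
and equal to `T`; i.e. the series `u` acts on `N` as the operator `T` -/
def ActsAs (u : Series K Q) (T : (∀ i, N.M i) →ₗ[K] (∀ i, N.M i)) : Prop :=
  ∃ fs : Finset Q.Pth, (∀ p ∉ fs, u p • N.pAct p = 0) ∧
    (∑ p ∈ fs, u p • N.pAct p) = T

/-- the series `u` annihilates `N` -/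
def AnnihilatedBy (u : Series K Q) : Prop := N.ActsAs u 0

/-- `N` satisfies (is annihilated by) the cyclic derivatives of the potential `S` -/
def SatisfiesCycDerivs (S : Series K Q) : Prop :=
  ∀ e : Q.E, N.AnnihilatedBy (cycDeriv S e)

/-- `N` is (the datum of) a decorated representation of the QP `(Q, S)`: a nilpotent
representation annihilated by the cyclic derivatives of `S` (equivalently, by the
Jacobian ideal `J(S)`), together with the decoration. -/
def IsDec (S : Series K Q) : Prop := N.Nilpotent ∧ N.SatisfiesCycDerivs S

/-- `I`-path-restrictability: every (well-formed) path with endpoints in `I` passing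
through a vertex outside `I` acts as zero. -/
def PathRestrictable (I : Set V) : Prop :=
  ∀ p : Q.Pth, Q.WF p → p.1 ∈ I → Q.endV p ∈ I →
    (∃ k ∈ Q.visits p, k ∉ I) → N.pAct p = 0

end PreRep

/-- A right-equivalence between decorated representations `N` of `(Q, S)` and `N'` of
`(Q', S')`: a right-equivalence `φ` of the QPs, a compatible vector-space isomorphism
`ψ` of the underlying modules (i.e. `ψ ∘ u_M = φ(u)_{M'} ∘ ψ` for all `u ∈ R⟨⟨Q⟩⟩`),
and an `R`-module isomorphism `η` of the decorations. -/
structure RepEquiv (Q Q' : Quiv V) (S : pathAlg K Q) (S' : pathAlg K Q')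
    (N : PreRep K Q) (N' : PreRep K Q') : Type 1 where
  qp : QPEquiv Q Q' S S'
  ψ : (∀ i, N.M i) ≃ₗ[K] (∀ i, N'.M i)
  compat : ∀ (u : pathAlg K Q) (T T'),
    N.ActsAs (u : Series K Q) T → N'.ActsAs ((qp.φ u : pathAlg K Q') : Series K Q') T' →
    ∀ x, ψ (T x) = T' (ψ x)
  η : ∀ i, N.D i ≃ₗ[K] N'.D i

/-- decorated representations are right-equivalent -/
def RepRightEquivalent (Q Q' : Quiv V) (S : pathAlg K Q) (S' : pathAlg K Q')
    (N : PreRep K Q) (N' : PreRep K Q') : Prop :=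
  Nonempty (RepEquiv Q Q' S S' N N')

section Sandwich

variable {M : V → Type} [∀ i, AddCommGroup (M i)] [∀ i, Module K (M i)]

theorem sandwich_supp (a b : V) (f : M a →ₗ[K] M b) :
    (vproj M b).comp
        (((LinearMap.single K M b).comp (f.comp (LinearMap.proj a))).comp (vproj M a))
      = (LinearMap.single K M b).comp (f.comp (LinearMap.proj a)) := by
  ext x : 1
  simp [vproj]

end Sandwich

open Classical in
/-- the submodule family realizing the restriction to `I`: everything over `I`,
zero outside -/
noncomputable def resMod {Q : Quiv V} (N : PreRep K Q) (I : Set V) (i : V) :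
    Submodule K (N.M i) :=
  if i ∈ I then ⊤ else ⊥

/-- Restriction of a representation to a vertex subset `I`: the spaces over vertices of
`I` are kept, the others are replaced by `0`; arrows of `Q|_I` act as before; the
decoration is unchanged. -/
noncomputable def PreRep.restrict {Q : Quiv V} (N : PreRep K Q) (I : Set V) :
    PreRep K (Q.restrict I) where
  M i := ↥(resMod N I i)
  fd i := letI := N.fd i; inferInstance
  act e :=
    (LinearMap.single K (fun i => ↥(resMod N I i)) (Q.t e.1)).comp
      ((LinearMap.codRestrict (resMod N I (Q.t e.1))
          ((N.actHom e.1).comp (Submodule.subtype (resMod N I (Q.s e.1))))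
          (fun x => by
            unfold resMod
            rw [if_pos e.2.2]
            exact Submodule.mem_top)).comp
        (LinearMap.proj (Q.s e.1)))
  supp e := sandwich_supp (Q.s e.1) (Q.t e.1) _
  D := N.D
  fdD := N.fdD

end Reps

/-! ### Direct sums, trivial and reduced QPs, reduced parts -/

section Splitting

variable {K : Type} [Field K]

/-- direct sum of two quivers on the same vertex set -/
def Quiv.sum (Qa Qc : Quiv V) : Quiv V where
  E := Qa.E ⊕ Qc.E
  s := Sum.elim Qa.s Qc.s
  t := Sum.elim Qa.t Qc.t

open Classical in
/-- a series on `Qa`, viewed as a series on `Qa ⊕ Qc` (gated by well-formedness;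
for series supported on well-formed paths this is the canonical embedding) -/
noncomputable def sumInl (Qa Qc : Quiv V) (u : Series K Qa) :
    Series K (Qa.sum Qc) := fun p =>
  if (Qa.sum Qc).WF p then
    (if h : ∀ e ∈ p.2, e.isLeft = true then
      u (p.1, p.2.pmap (fun e he => Sum.getLeft e he) h)
    else 0)
  else 0

open Classical in
/-- a series on `Qc`, viewed as a series on `Qa ⊕ Qc` -/
noncomputable def sumInr (Qa Qc : Quiv V) (u : Series K Qc) :
    Series K (Qa.sum Qc) := fun p =>
  if (Qa.sum Qc).WF p then
    (if h : ∀ e ∈ p.2, e.isRight = true then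
      u (p.1, p.2.pmap (fun e he => Sum.getRight e he) h)
    else 0)
  else 0

theorem sumInl_mem (Qa Qc : Quiv V) (u : Series K Qa) :
    sumInl Qa Qc u ∈ pathAlg K (Qa.sum Qc) := by
  intro p hp; unfold sumInl; rw [if_neg hp]

theorem sumInr_mem (Qa Qc : Quiv V) (u : Series K Qc) :
    sumInr Qa Qc u ∈ pathAlg K (Qa.sum Qc) := by
  intro p hp; unfold sumInr; rw [if_neg hp]

/-- direct sum `S ⊕ T` of two potentials, as an element of the complete path algebra of
the direct sum quiver -/
noncomputable def sumPA {Qa Qc : Quiv V} (Sa : pathAlg K Qa) (Tc : pathAlg K Qc) :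
    pathAlg K (Qa.sum Qc) :=
  ⟨sumInl Qa Qc (Sa : Series K Qa) + sumInr Qa Qc (Tc : Series K Qc),
    add_mem (sumInl_mem _ _ _) (sumInr_mem _ _ _)⟩

/-- the inclusion `R⟨⟨Qa⟩⟩ → R⟨⟨Qa ⊕ Qc⟩⟩` on path algebras -/
noncomputable def sumInlPA {Qa Qc : Quiv V} (u : pathAlg K Qa) :
    pathAlg K (Qa.sum Qc) :=
  ⟨sumInl Qa Qc (u : Series K Qa), sumInl_mem _ _ _⟩

/-- a reduced QP: the degree-2 component of the potential vanishes -/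
def IsReduced {Q : Quiv V} (S : Series K Q) : Prop :=
  ∀ p : Q.Pth, S p ≠ 0 → p.2.length ≠ 2

/-- a trivial QP: the potential is a sum of 2-cycles whose cyclic derivatives span the
arrow span of the quiver -/
def IsTrivialQP (Q : Quiv V) (S : Series K Q) : Prop :=
  IsPotential S ∧ (∀ p : Q.Pth, S p ≠ 0 → p.2.length = 2) ∧
  ∀ e : Q.E, (unitS (Q.s e, [e]) : Series K Q) ∈
    Submodule.span K (Set.range (cycDeriv S))

variable [DecidableEq V]

/-- Witness that `(Qr, Sr, Nr)` is (a realization of) the *reduced part* of the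
decorated representation `N` of `(Q, S)`: there are a trivial QP `(C, T)` and a
right-equivalence `φ` between `(Qr, Sr) ⊕ (C, T)` and `(Q, S)`, such that `Nr` has the
same underlying spaces and decoration as `N` (up to a grading-preserving isomorphism
`ψ`), with each arrow `e` of `Qr` acting as `φ(e)` acts on `N`. -/
structure ReducedPartData (Q : Quiv V) (S : pathAlg K Q)
    (Qr : Quiv V) (Sr : pathAlg K Qr)
    (Nr : PreRep K Qr) (N : PreRep K Q) : Type 1 where
  C : Quiv V
  T : pathAlg K C
  hred : IsReduced (Sr : Series K Qr)
  htriv : IsTrivialQP C (T : Series K C)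
  qp : QPEquiv (Qr.sum C) Q (sumPA Sr T) S
  ψ : (∀ i, Nr.M i) ≃ₗ[K] (∀ i, N.M i)
  grade : ∀ (i : V) (x), ψ (vproj (K := K) Nr.M i x) = vproj (K := K) N.M i (ψ x)
  compat : ∀ (e : Qr.E) (Tm),
    N.ActsAs ((qp.φ (sumInlPA (arrowPA K Qr e)) : pathAlg K Q) : Series K Q) Tm →
    ∀ x, ψ (Nr.act e x) = Tm (ψ x)
  η : ∀ i, Nr.D i ≃ₗ[K] N.D i

/-- the QP-level statement that `(Qr, Sr)` is a reduced part of `(Q, S)` -/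
def IsReducedQPOf (Q : Quiv V) (S : pathAlg K Q) (Qr : Quiv V) (Sr : pathAlg K Qr) :
    Prop :=
  IsReduced (Sr : Series K Qr) ∧ ∃ (C : Quiv V) (T : pathAlg K C),
    IsTrivialQP C (T : Series K C) ∧ Nonempty (QPEquiv (Qr.sum C) Q (sumPA Sr T) S)

end Splitting

/-! ### Premutation and mutation of QPs and of their decorated representations -/

section Premut

variable {K : Type} [Field K]

/-- arrows of `Q` ending at `j` -/
abbrev inArrows (Q : Quiv V) (j : V) : Type := {e : Q.E // Q.t e = j}
/-- arrows of `Q` starting at `j` -/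
abbrev outArrows (Q : Quiv V) (j : V) : Type := {e : Q.E // Q.s e = j}

/-- `Q` has no 2-cycles incident to the vertex `j` -/
def No2CycleAt (Q : Quiv V) (j : V) : Prop :=
  ¬ ∃ p : Q.Pth, Q.IsCycle p ∧ p.2.length = 2 ∧ j ∈ Q.visits p

/-- The premutated quiver `μ̃_j(Q)`: arrows not incident to `j` are kept; for every
`j`-hook (2-path `a` then `b` through `j`) there is a new arrow `[ab] : s a → t b`;
every arrow incident to `j` is replaced by a reversed arrow. -/
def Quiv.premut (Q : Quiv V) (j : V) : Quiv V where
  E := {e : Q.E // Q.s e ≠ j ∧ Q.t e ≠ j} ⊕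
    ((inArrows Q j × outArrows Q j) ⊕ {e : Q.E // Q.s e = j ∨ Q.t e = j})
  s := fun x => match x with
    | .inl e => Q.s e.1
    | .inr (.inl ab) => Q.s ab.1.1
    | .inr (.inr e) => Q.t e.1
  t := fun x => match x with
    | .inl e => Q.t e.1
    | .inr (.inl ab) => Q.t ab.2.1
    | .inr (.inr e) => Q.s e.1

/-- the hook arrow `[ab]` of the premutated quiver -/
def hookE {Q : Quiv V} {j : V} (a : inArrows Q j) (b : outArrows Q j) :
    (Q.premut j).E := .inr (.inl (a, b))

/-- the reversed arrow `b*` (for `b` starting at `j`) -/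
def starOut {Q : Quiv V} {j : V} (b : outArrows Q j) : (Q.premut j).E :=
  .inr (.inr ⟨b.1, Or.inl b.2⟩)

/-- the reversed arrow `a*` (for `a` ending at `j`) -/
def starIn {Q : Quiv V} {j : V} (a : inArrows Q j) : (Q.premut j).E :=
  .inr (.inr ⟨a.1, Or.inr a.2⟩)

/-- Unhooking: replaces each kept arrow by itself and each hook arrow `[ab]` by the
2-path `a b`; undefined (`none`) on lists containing reversed arrows. -/
def unhook (Q : Quiv V) (j : V) : List (Q.premut j).E → Option (List Q.E)
  | [] => some []
  | .inl e :: l => (unhook Q j l).map (e.1 :: ·)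
  | .inr (.inl ab) :: l => (unhook Q j l).map (fun m => ab.1.1 :: ab.2.1 :: m)
  | .inr (.inr _) :: _ => none

/-- the 3-cycle `b* a* [ab]` of the premutated quiver attached to a `j`-hook -/
def hookCycle {Q : Quiv V} (j : V) (ab : inArrows Q j × outArrows Q j) :
    (Q.premut j).Pth :=
  (Q.s ab.1.1, [hookE ab.1 ab.2, starOut ab.2, starIn ab.1])

open Classical in
/-- The premutated potential `μ̃_j(S) = [S] + Δ_j(Q)`: `[S]` is obtained from `S`
(assumed to have no cyclic term starting at `j`) by replacing every `j`-hook by the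
corresponding hook arrow, and `Δ_j(Q) = ∑ b* a* [ab]`.  (The formula is gated by
well-formedness; for a potential `S` this does not change the value.) -/
noncomputable def premutPotential {Q : Quiv V} (j : V) (S : Series K Q) :
    Series K (Q.premut j) := fun p =>
  if (Q.premut j).WF p then
    ((unhook Q j p.2).elim 0 fun m => S (p.1, m)) +
      (if ∃ ab, p = hookCycle j ab then 1 else 0)
  else 0

theorem premutPotential_mem {Q : Quiv V} (j : V) (S : Series K Q) :
    premutPotential j S ∈ pathAlg K (Q.premut j) := by
  intro p hp; unfold premutPotential; rw [if_neg hp]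

/-- the premutated potential as an element of the complete path algebra -/
noncomputable def premutPA {Q : Quiv V} (j : V) (S : pathAlg K Q) :
    pathAlg K (Q.premut j) :=
  ⟨premutPotential j (S : Series K Q), premutPotential_mem j _⟩

variable [DecidableEq V]

namespace PreRep

variable {Q : Quiv V} (N : PreRep K Q)

/-- the action of a path datum of the premutated quiver on `N` (hook arrows acting as the
corresponding 2-paths, reversed arrows acting as zero) -/
noncomputable def pActPre (j : V) (p : (Q.premut j).Pth) :
    (∀ i, N.M i) →ₗ[K] (∀ i, N.M i) :=
  (unhook Q j p.2).elim 0 fun m => N.pAct (p.1, m)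

/-- the series `u` on the premutated quiver acts on `N` as the operator `T` -/
def ActsAsPre (j : V) (u : Series K (Q.premut j))
    (T : (∀ i, N.M i) →ₗ[K] (∀ i, N.M i)) : Prop :=
  ∃ fs : Finset (Q.premut j).Pth, (∀ p ∉ fs, u p • N.pActPre j p = 0) ∧
    (∑ p ∈ fs, u p • N.pActPre j p) = T

variable (j : V)

/-- `M_in = ⊕ M_{s a}`, sum over the arrows `a` ending at `j` -/
def Min : Type := ∀ a : inArrows Q j, N.M (Q.s a.1)

/-- `M_out = ⊕ M_{t b}`, sum over the arrows `b` starting at `j` -/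
def Mout : Type := ∀ b : outArrows Q j, N.M (Q.t b.1)

instance : AddCommGroup (N.Min j) := inferInstanceAs (AddCommGroup (∀ a : inArrows Q j, N.M (Q.s a.1)))
instance : Module K (N.Min j) := inferInstanceAs (Module K (∀ a : inArrows Q j, N.M (Q.s a.1)))
instance : AddCommGroup (N.Mout j) := inferInstanceAs (AddCommGroup (∀ b : outArrows Q j, N.M (Q.t b.1)))
instance : Module K (N.Mout j) := inferInstanceAs (Module K (∀ b : outArrows Q j, N.M (Q.t b.1)))

/-- the map `a : M_in → M_j` assembled from the arrows ending at `j` -/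
noncomputable def ain [Finite Q.E] : N.Min j →ₗ[K] N.M j :=
  letI : Fintype (inArrows Q j) := Fintype.ofFinite _
  ∑ a : inArrows Q j,
    (LinearMap.proj j).comp ((N.act a.1).comp
      ((LinearMap.single K N.M (Q.s a.1)).comp
        (LinearMap.proj (φ := fun a : inArrows Q j => N.M (Q.s a.1)) a)))

/-- the map `b : M_j → M_out` assembled from the arrows starting at `j` -/
noncomputable def bout : N.M j →ₗ[K] N.Mout j :=
  LinearMap.pi fun b : outArrows Q j =>
    (LinearMap.proj (Q.t b.1)).comp ((N.act b.1).comp (LinearMap.single K N.M j))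

open Classical in
/-- the condition that `c : M_out → M_in` is the matrix of the maps given by the actions
of the cyclic derivatives `∂_{[ab]}(μ̃_j S)` -/
noncomputable def IsCFor [Finite Q.E] (S : Series K Q) (c : N.Mout j →ₗ[K] N.Min j) : Prop :=
  ∀ (a : inArrows Q j) (b : outArrows Q j),
    N.ActsAsPre j (cycDeriv (premutPotential j S) (hookE a b))
      ((LinearMap.single K N.M (Q.s a.1)).comp
        (((LinearMap.proj (φ := fun a : inArrows Q j => N.M (Q.s a.1)) a).comp
            (c.comp (LinearMap.single K (fun b : outArrows Q j => N.M (Q.t b.1)) b))).comp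
          (LinearMap.proj (Q.t b.1))))

end PreRep

section BarredSpaces

variable {Q : Quiv V} (N : PreRep K Q) (j : V) [Finite Q.E]

/-- the barred space `M̄_j = ker c / im b ⊕ im c ⊕ ker a / im c ⊕ V_j` of the
premutation of a decorated representation -/
noncomputable abbrev barMj (c : N.Mout j →ₗ[K] N.Min j) : Type :=
  ((↥(LinearMap.ker c)) ⧸
      Submodule.comap (LinearMap.ker c).subtype (LinearMap.range (N.bout j)))
  × ↥(LinearMap.range c)
  × ((↥(LinearMap.ker (N.ain j))) ⧸
      Submodule.comap (LinearMap.ker (N.ain j)).subtype (LinearMap.range c))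
  × N.D j

/-- the barred decoration `V̄_j = ker b / (ker b ∩ im a)` -/
noncomputable abbrev barVj : Type :=
  (↥(LinearMap.ker (N.bout j))) ⧸
    Submodule.comap (LinearMap.ker (N.bout j)).subtype (LinearMap.range (N.ain j))

/-- the map `ā = [-pr; -c; 0; 0] : M_out → M̄_j` (given a retraction `r` onto `ker c`) -/
noncomputable def abar (c : N.Mout j →ₗ[K] N.Min j)
    (r : N.Mout j →ₗ[K] ↥(LinearMap.ker c)) : N.Mout j →ₗ[K] barMj N j c :=
  LinearMap.prod
    (-((Submodule.comap (LinearMap.ker c).subtype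
        (LinearMap.range (N.bout j))).mkQ.comp r))
    (LinearMap.prod (-(c.rangeRestrict))
      (LinearMap.prod 0 0))

/-- the map `b̄ = [0, i, i s, 0] : M̄_j → M_in` (given a section `s` of the projection
`ker a ↠ ker a / im c`) -/
noncomputable def bbar (c : N.Mout j →ₗ[K] N.Min j)
    (sσ : ((↥(LinearMap.ker (N.ain j))) ⧸
        Submodule.comap (LinearMap.ker (N.ain j)).subtype (LinearMap.range c))
      →ₗ[K] ↥(LinearMap.ker (N.ain j))) :
    barMj N j c →ₗ[K] N.Min j :=
  ((LinearMap.range c).subtype.comp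
      ((LinearMap.fst K _ _).comp (LinearMap.snd K _ _)))
  + ((LinearMap.ker (N.ain j)).subtype.comp
      (sσ.comp ((LinearMap.fst K _ _).comp
        ((LinearMap.snd K _ _).comp (LinearMap.snd K _ _)))))

open Classical in
/-- Witness that `Nt` is (a realization of) the premutation `μ̃_j` of the decorated
representation `N` of `(Q, S₀)` (where no cyclic term of `S₀` starts at `j`), following
Derksen–Weyman–Zelevinsky: the spaces away from `j` are unchanged, the space at `j` is
`ker c/im b ⊕ im c ⊕ ker a/im c ⊕ V_j`, kept arrows and hook arrows act as in `N`, and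
the reversed arrows act through the maps `ā`, `b̄` determined by choices of a retraction
`r` and a section `s`. -/
structure PremutRepData (S₀ : Series K Q) (Nt : PreRep K (Q.premut j))
    (N : PreRep K Q) : Type 1 where
  c : N.Mout j →ₗ[K] N.Min j
  hc : N.IsCFor j S₀ c
  r : N.Mout j →ₗ[K] ↥(LinearMap.ker c)
  hr : ∀ x : ↥(LinearMap.ker c), r x.1 = x
  sσ : ((↥(LinearMap.ker (N.ain j))) ⧸
      Submodule.comap (LinearMap.ker (N.ain j)).subtype (LinearMap.range c))
    →ₗ[K] ↥(LinearMap.ker (N.ain j))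
  hs : ∀ y, (Submodule.comap (LinearMap.ker (N.ain j)).subtype
      (LinearMap.range c)).mkQ (sσ y) = y
  ψ : ∀ i : V, i ≠ j → (Nt.M i ≃ₗ[K] N.M i)
  ψj : Nt.M j ≃ₗ[K] barMj N j c
  hInl : ∀ (e : {e : Q.E // Q.s e ≠ j ∧ Q.t e ≠ j}) (x : ∀ i, Nt.M i),
    (ψ (Q.t e.1) e.2.2) ((Nt.act (Sum.inl e) x) (Q.t e.1))
      = N.actHom e.1 ((ψ (Q.s e.1) e.2.1) (x (Q.s e.1)))
  hHook : ∀ (a : inArrows Q j) (b : outArrows Q j)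
      (ha : Q.s a.1 ≠ j) (hb : Q.t b.1 ≠ j) (x : ∀ i, Nt.M i),
    (ψ (Q.t b.1) hb) ((Nt.act (hookE a b) x) (Q.t b.1))
      = (N.act b.1 (N.act a.1 (LinearMap.single K N.M (Q.s a.1)
          ((ψ (Q.s a.1) ha) (x (Q.s a.1)))))) (Q.t b.1)
  hStarOut : ∀ (b : outArrows Q j) (hb : Q.t b.1 ≠ j) (x : ∀ i, Nt.M i),
    ψj ((Nt.act (starOut b) x) j)
      = abar N j c r (LinearMap.single K (fun b : outArrows Q j => N.M (Q.t b.1)) b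
          ((ψ (Q.t b.1) hb) (x (Q.t b.1))))
  hStarIn : ∀ (a : inArrows Q j) (ha : Q.s a.1 ≠ j) (x : ∀ i, Nt.M i),
    (ψ (Q.s a.1) ha) ((Nt.act (starIn a) x) (Q.s a.1))
      = bbar N j c sσ (ψj (x j)) a
  hDec : ∀ i : V, i ≠ j → Nonempty (Nt.D i ≃ₗ[K] N.D i)
  hDecj : Nonempty (Nt.D j ≃ₗ[K] barVj N j)

end BarredSpaces

/-- `N1` (a decorated representation of `(Q1, S1)`) is a mutation `μ_j` of the decorated
representation `N` of `(Q, S)`: after replacing `S` by a cyclically equivalent potential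
`S₀` none of whose terms starts at `j`, `N1` is a reduced part of a premutation of `N`
at `j` (and `(Q1, S1)` a reduced part of the premutated QP). -/
def IsMutationRepOf {Q : Quiv V} [Finite Q.E] (j : V) (S : pathAlg K Q)
    {Q1 : Quiv V} (S1 : pathAlg K Q1) (N1 : PreRep K Q1) (N : PreRep K Q) : Prop :=
  No2CycleAt Q j ∧ ∃ S₀ : pathAlg K Q, IsPotential (S₀ : Series K Q) ∧
    CyclicEquiv ((S₀ : Series K Q)) ((S : Series K Q)) ∧
    (∀ p : Q.Pth, (S₀ : Series K Q) p ≠ 0 → p.1 ≠ j) ∧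
    ∃ Nt : PreRep K (Q.premut j),
      Nonempty (PremutRepData j ((S₀ : Series K Q)) Nt N) ∧
      Nonempty (ReducedPartData (Q.premut j) (premutPA j S₀) Q1 S1 N1 Nt)

/-- `(Q', S')` is a mutation `μ_j` of the QP `(Q, S)`. -/
def IsMutationQPOf {Q : Quiv V} (j : V) (S : pathAlg K Q)
    (Q' : Quiv V) (S' : pathAlg K Q') : Prop :=
  No2CycleAt Q j ∧ ∃ S₀ : pathAlg K Q, IsPotential (S₀ : Series K Q) ∧
    CyclicEquiv ((S₀ : Series K Q)) ((S : Series K Q)) ∧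
    (∀ p : Q.Pth, (S₀ : Series K Q) p ≠ 0 → p.1 ≠ j) ∧
    IsReducedQPOf (Q.premut j) (premutPA j S₀) Q' S'

/-- a quiver is 2-acyclic if it has no 2-cycles -/
def TwoAcyclic (Q : Quiv V) : Prop := ¬ ∃ p : Q.Pth, Q.IsCycle p ∧ p.2.length = 2

end Premut

end QPF


namespace QPF

/-! ### The QP of the canonical (ideal) triangulation of the once-punctured torus

Vertices `0, 1, 2`; arrows `c1 = 0, c2 = 1 : 0 → 1`, `b1 = 2, b2 = 3 : 1 → 2`,
`a1 = 4, a2 = 5 : 2 → 0`.  Paths are composed as functions (right-to-left), so the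
3-cycle `a1 b1 c1` is traversed `c1`, then `b1`, then `a1`; in list form (arrows listed
in traversal order, based at the start vertex) it is `(0, [0, 2, 4])`. -/

def torusQ : Quiv (Fin 3) where
  E := Fin 6
  s := fun e => ![0, 0, 1, 1, 2, 2] e
  t := fun e => ![1, 1, 2, 2, 0, 0] e

/-- the 3-cycle `a1 b1 c1` -/
def torusCyc1 : torusQ.Pth := ((0 : Fin 3), ([0, 2, 4] : List (Fin 6)))
/-- the 3-cycle `a2 b2 c2` -/
def torusCyc2 : torusQ.Pth := ((0 : Fin 3), ([1, 3, 5] : List (Fin 6)))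
/-- the 6-cycle `a1 b2 c1 a2 b1 c2` -/
def torusCyc6 : torusQ.Pth := ((0 : Fin 3), ([1, 2, 5, 0, 3, 4] : List (Fin 6)))
/-- the 6-cycle `a2 b1 c2 a1 b2 c1` -/
def torusCyc6' : torusQ.Pth := ((0 : Fin 3), ([0, 3, 4, 1, 2, 5] : List (Fin 6)))

theorem torus_wf1 : torusQ.WF torusCyc1 := by
  constructor <;> simp [torusCyc1, torusQ, List.Chain', List.isChain_cons_cons, Quiv.WF] <;> first | decide | (intro e he; cases he; rfl)
theorem torus_wf2 : torusQ.WF torusCyc2 := by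
  constructor <;> simp [torusCyc2, torusQ, List.Chain', List.isChain_cons_cons, Quiv.WF] <;> first | decide | (intro e he; cases he; rfl)
theorem torus_wf6 : torusQ.WF torusCyc6 := by
  constructor <;> simp [torusCyc6, torusQ, List.Chain', List.isChain_cons_cons, Quiv.WF] <;> first | decide | (intro e he; cases he; rfl)
theorem torus_wf6' : torusQ.WF torusCyc6' := by
  constructor <;> simp [torusCyc6', torusQ, List.Chain', List.isChain_cons_cons, Quiv.WF] <;> first | decide | (intro e he; cases he; rfl)

variable (K : Type) [Field K]

/-- the potential `S = a1 b1 c1 + a2 b2 c2 + x · a1 b2 c1 a2 b1 c2` of the canonical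
triangulation of the once-punctured torus -/
noncomputable def torusS (x : K) : Series K torusQ :=
  unitS torusCyc1 + unitS torusCyc2 + x • unitS torusCyc6

theorem torusS_mem (x : K) : torusS K x ∈ pathAlg K torusQ := by
  refine add_mem (add_mem (unitS_mem torus_wf1) (unitS_mem torus_wf2)) ?_
  exact Subalgebra.smul_mem _ (unitS_mem torus_wf6) x

/-- the canonical once-punctured-torus potential as an element of `R⟨⟨Q⟩⟩` -/
noncomputable def torusSPA (x : K) : pathAlg K torusQ := ⟨torusS K x, torusS_mem K x⟩

end QPF

namespace QPF

/-- the finite set of lists of arrows of length at most `n` -/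
def listsUpTo (n : ℕ) : Finset (List (Fin 6)) :=
  match n with
  | 0 => {[]}
  | n + 1 => {[]} ∪ (Finset.univ ×ˢ listsUpTo n).image fun q => q.1 :: q.2

/-- the finite set of path data of the once-punctured-torus quiver of length at most `n` -/
def torusPathsUpTo (n : ℕ) : Finset torusQ.Pth :=
  (Finset.univ : Finset (Fin 3)) ×ˢ listsUpTo n

namespace Torus

/-- boolean chain check for the torus quiver -/
def chainB : List (Fin 6) → Bool
  | [] => true
  | [_] => true
  | e :: f :: l => (torusQ.t e == torusQ.s f) && chainB (f :: l)

/-- boolean well-formedness check for the torus quiver -/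
def wfB (p : Fin 3 × List (Fin 6)) : Bool :=
  (match p.2 with
    | [] => true
    | e :: _ => torusQ.s e == p.1) && chainB p.2

theorem chainB_iff (l : List (Fin 6)) :
    List.Chain' (fun e f => torusQ.t e = torusQ.s f) l ↔ chainB l = true := by
  show List.IsChain (fun e f : Fin 6 => torusQ.t e = torusQ.s f) l ↔ _
  induction l with
  | nil => simp [chainB]
  | cons e l ih =>
      cases l with
      | nil => simp [chainB]
      | cons f m =>
          erw [List.isChain_cons_cons, chainB, Bool.and_eq_true, beq_iff_eq, ih]

theorem wf_iffB (p : torusQ.Pth) : torusQ.WF p ↔ wfB p = true := by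
  obtain ⟨i, l⟩ := p
  show (_ ∧ _) ↔ _
  unfold wfB
  rw [Bool.and_eq_true, ← chainB_iff]
  cases l with
  | nil => simp
  | cons e m => simp [beq_iff_eq, and_comm]

/-- the "short" word (matched pair) of the cyclic derivative wrt arrow `g` -/
def sL (g : Fin 6) : List (Fin 6) := [g+2, g+4]

/-- the "long" word of the cyclic derivative wrt arrow `g` -/
def lL : Fin 6 → List (Fin 6)
  | 0 => [3,4,1,2,5]
  | 1 => [2,5,0,3,4]
  | 2 => [5,0,3,4,1]
  | 3 => [4,1,2,5,0]
  | 4 => [1,2,5,0,3]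
  | 5 => [0,3,4,1,2]

def L0 : Fin 6 → Fin 6 | 0 => 3 | 1 => 2 | 2 => 5 | 3 => 4 | 4 => 1 | 5 => 0
def L1 : Fin 6 → Fin 6 | 0 => 4 | 1 => 5 | 2 => 0 | 3 => 1 | 4 => 2 | 5 => 3
def L2 : Fin 6 → Fin 6 | 0 => 1 | 1 => 0 | 2 => 3 | 3 => 2 | 4 => 5 | 5 => 4
def L3 : Fin 6 → Fin 6 | 0 => 2 | 1 => 3 | 2 => 4 | 3 => 5 | 4 => 0 | 5 => 1
def L4 : Fin 6 → Fin 6 | 0 => 5 | 1 => 4 | 2 => 1 | 3 => 0 | 4 => 3 | 5 => 2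

theorem lL_eq : ∀ g : Fin 6, lL g = [L0 g, L1 g, L2 g, L3 g, L4 g] := by decide

theorem wf_sL : ∀ g : Fin 6, torusQ.WF (torusQ.t g, sL g) :=
  fun g => (wf_iffB _).mpr (by revert g; decide)
theorem wf_lL : ∀ g : Fin 6, torusQ.WF (torusQ.t g, lL g) :=
  fun g => (wf_iffB _).mpr (by revert g; decide)
theorem endV_sL : ∀ g : Fin 6, torusQ.endV (torusQ.t g, sL g) = torusQ.s g := by delta torusQ; decide
theorem endV_lL : ∀ g : Fin 6, torusQ.endV (torusQ.t g, lL g) = torusQ.s g := by delta torusQ; decide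
theorem s_sL_head : ∀ g : Fin 6, torusQ.s (g + 2) = torusQ.t g := by delta torusQ; decide
theorem s_lL_head : ∀ g : Fin 6, torusQ.s (L0 g) = torusQ.t g := by delta torusQ; decide
theorem lL_length : ∀ g : Fin 6, (lL g).length = 5 := by decide

end Torus

section SeriesLemmas

open Series

variable {V : Type} {K : Type} [Field K] {Q : Quiv V}

theorem unitS_apply_eq {p q : Q.Pth} (h : q = p) : (unitS p : Series K Q) q = 1 := by
  unfold unitS; exact if_pos h

theorem unitS_apply_ne {p q : Q.Pth} (h : q ≠ p) : (unitS p : Series K Q) q = 0 := by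
  unfold unitS; exact if_neg h

open Classical in
theorem ite_sum_splits {α : Type} (a b : List α) (c : K) :
    ∀ l : List α,
    ((splits l).map fun q => if q = (a, b) then c else 0).sum = if a ++ b = l then c else 0 := by
  induction a with
  | nil =>
      intro l
      cases l with
      | nil => simp [splits_nil]
      | cons e l =>
          rw [splits_cons]
          simp only [List.map_cons, List.sum_cons, List.map_map, Function.comp_def]
          have h0 : ∀ q ∈ splits l,
              (if ((e :: q.1 : List α), q.2) = (([] : List α), b) then c else 0) = 0 := by
            intro q _
            rw [if_neg (show ¬((e :: q.1 : List α), q.2) = (([] : List α), b) by simp)]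
          rw [List.map_congr_left h0]
          by_cases hb : b = e :: l
          · rw [if_pos (by rw [hb]), if_pos (by rw [hb]; rfl)]
            simp
          · rw [if_neg (by simpa [eq_comm] using hb), if_neg (by simpa using hb)]
            simp
  | cons a0 a' ih =>
      intro l
      cases l with
      | nil =>
          simp only [splits_nil, List.map_cons, List.map_nil, List.sum_cons, List.sum_nil,
            add_zero]
          rw [if_neg (show ¬(([] : List α), ([] : List α)) = (a0 :: a', b) by simp),
            if_neg (show ¬(a0 :: a') ++ b = [] by simp)]
      | cons e l =>
          rw [splits_cons]
          simp only [List.map_cons, List.sum_cons, List.map_map, Function.comp_def]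
          rw [if_neg (show ¬(([] : List α), e :: l) = (a0 :: a', b) by simp)]
          by_cases he : a0 = e
          · subst he
            have h1 : ∀ q ∈ splits l,
                (if ((a0 :: q.1 : List α), q.2) = (a0 :: a', b) then c else 0)
                  = if q = (a', b) then c else 0 := by
              intro q _
              by_cases hq : q = (a', b)
              · subst hq; simp
              · rw [if_neg, if_neg hq]
                intro hcon
                apply hq
                have h1 : (a0 :: q.1 : List α) = a0 :: a' := by
                  simpa using congrArg Prod.fst hcon
                exact Prod.ext (by simpa using h1) (by simpa using congrArg Prod.snd hcon)
            rw [List.map_congr_left h1, ih l, zero_add]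
            simp only [List.cons_append, List.cons.injEq, true_and]
          · have h1 : ∀ q ∈ splits l,
                (if ((e :: q.1 : List α), q.2) = (a0 :: a', b) then c else 0) = 0 := by
              intro q _
              rw [if_neg]
              intro hcon
              have := congrArg Prod.fst hcon
              simp only [List.cons.injEq] at this
              exact he this.1.symm
            rw [List.map_congr_left h1,
              if_neg (show ¬(a0 :: a') ++ b = e :: l from fun hcon =>
                he (by simpa using congrArg List.head? hcon))]
            simp

open Classical in
theorem unitS_mul_apply (i j : V) (a b : List Q.E) (k : V) (l : List Q.E) :
    (unitS (i, a) * unitS (j, b) : Series K Q) (k, l)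
      = if k = i ∧ j = Q.endV (i, a) ∧ l = a ++ b then 1 else 0 := by
  show ((splits l).map fun q =>
      (unitS (i,a) : Series K Q) (k, q.1)
        * (unitS (j,b) : Series K Q) (Q.endV (k, q.1), q.2)).sum = _
  have h1 : ∀ q ∈ splits l,
      (unitS (i,a) : Series K Q) (k, q.1) * (unitS (j,b) : Series K Q) (Q.endV (k, q.1), q.2)
        = if q = (a, b) then (if k = i ∧ j = Q.endV (i, a) then (1:K) else 0) else 0 := by
    intro q _
    by_cases hq : q = (a, b)
    · subst hq
      rw [if_pos rfl]
      by_cases hk : k = i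
      · subst hk
        rw [unitS_apply_eq rfl, one_mul]
        by_cases hj : j = Q.endV (k, a)
        · rw [unitS_apply_eq (by rw [hj]), if_pos ⟨rfl, hj⟩]
        · have hne : ((Q.endV (k, a), b) : Q.Pth) ≠ (j, b) := fun hcon =>
            hj (show Q.endV (k, a) = j by simpa using congrArg Prod.fst hcon).symm
          rw [unitS_apply_ne hne, if_neg (by tauto)]
      · have hne : ((k, a) : Q.Pth) ≠ (i, a) := fun hcon =>
          hk (by simpa using congrArg Prod.fst hcon)
        rw [unitS_apply_ne hne, zero_mul, if_neg (by tauto)]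
    · rw [if_neg hq]
      by_cases h2 : ((k, q.1) : Q.Pth) = (i, a)
      · have hq2 : q.2 ≠ b := fun hcon =>
          hq (Prod.ext (by simpa using congrArg Prod.snd h2) hcon)
        rw [unitS_apply_ne (p := ((j, b) : Q.Pth))
          (fun hcon => hq2 (by simpa using congrArg Prod.snd hcon)), mul_zero]
      · rw [unitS_apply_ne h2, zero_mul]
  rw [List.map_congr_left h1, ite_sum_splits]
  by_cases hl : a ++ b = l
  · rw [if_pos hl]
    by_cases hc : k = i ∧ j = Q.endV (i, a)
    · rw [if_pos hc, if_pos ⟨hc.1, hc.2, hl.symm⟩]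
    · rw [if_neg hc, if_neg (by tauto)]
  · rw [if_neg hl, if_neg (by rintro ⟨-, -, h⟩; exact hl h.symm)]

theorem unitS_mul_unitS (i : V) (a b : List Q.E) :
    (unitS (i, a) * unitS (Q.endV (i, a), b) : Series K Q) = unitS (i, a ++ b) := by
  funext p
  obtain ⟨k, l⟩ := p
  rw [unitS_mul_apply]
  by_cases h : (k, l) = ((i, a ++ b) : Q.Pth)
  · rw [unitS_apply_eq h, if_pos ⟨by simpa using congrArg Prod.fst h, rfl,
      by simpa using congrArg Prod.snd h⟩]
  · rw [unitS_apply_ne h, if_neg]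
    rintro ⟨h1, -, h2⟩
    exact h (Prod.ext h1 h2)

theorem mid_unique {α : Type} {e : α} :
    ∀ {A : List α} {q2 q1 B : List α}, e ∉ A → e ∉ B →
      q2 ++ e :: q1 = A ++ e :: B → q2 = A ∧ q1 = B := by
  intro A
  induction A with
  | nil =>
      intro q2 q1 B _ hB h
      cases q2 with
      | nil => simpa using h
      | cons c q2' =>
          simp only [List.cons_append, List.nil_append, List.cons.injEq] at h
          exact absurd (h.2 ▸ (List.mem_append.mpr (Or.inr (List.mem_cons_self)))) hB
  | cons a A' ih =>
      intro q2 q1 B hA hB h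
      cases q2 with
      | nil =>
          simp only [List.nil_append, List.cons_append, List.cons.injEq] at h
          exact absurd (h.1 ▸ List.mem_cons_self) hA
      | cons c q2' =>
          simp only [List.cons_append, List.cons.injEq] at h
          obtain ⟨h1, h2⟩ := ih (fun hm => hA (List.mem_cons_of_mem a hm)) hB h.2
          exact ⟨by rw [h.1, h1], h2⟩

open Classical in
theorem helper_occ (k c1 : V) (A B : List Q.E) (e : Q.E) (hA : e ∉ A) (hB : e ∉ B)
    (l : List Q.E) :
    ((splits l).map fun q =>
        (unitS ((c1, A ++ e :: B) : Q.Pth) : Series K Q) (Q.endV (k, q.1), q.2 ++ e :: q.1)).sum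
      = if Q.endV (k, B) = c1 ∧ l = B ++ A then 1 else 0 := by
  have h1 : ∀ q ∈ splits l,
      (unitS ((c1, A ++ e :: B) : Q.Pth) : Series K Q) (Q.endV (k, q.1), q.2 ++ e :: q.1)
        = if q = (B, A) then (if Q.endV (k, B) = c1 then (1:K) else 0) else 0 := by
    intro q _
    by_cases hq : q = (B, A)
    · subst hq
      rw [if_pos rfl]
      by_cases hc : Q.endV (k, B) = c1
      · rw [unitS_apply_eq (by rw [hc]), if_pos hc]
      · have hne : ((Q.endV (k, B), A ++ e :: B) : Q.Pth) ≠ (c1, A ++ e :: B) := fun hcon =>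
          hc (by simpa using congrArg Prod.fst hcon)
        rw [unitS_apply_ne hne, if_neg hc]
    · rw [if_neg hq]
      apply unitS_apply_ne
      intro hcon
      have h2 : q.2 ++ e :: q.1 = A ++ e :: B := by simpa using congrArg Prod.snd hcon
      obtain ⟨hh1, hh2⟩ := mid_unique hA hB h2
      exact hq (Prod.ext hh2 hh1)
  rw [List.map_congr_left h1, ite_sum_splits]
  by_cases hl : B ++ A = l
  · rw [if_pos hl]
    by_cases hc : Q.endV (k, B) = c1
    · rw [if_pos hc, if_pos ⟨hc, hl.symm⟩]
    · rw [if_neg hc, if_neg (by tauto)]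
  · rw [if_neg hl, if_neg (by rintro ⟨-, h⟩; exact hl h.symm)]

theorem helper_no_occ (k c1 : V) (C : List Q.E) (e : Q.E) (hC : e ∉ C) (l : List Q.E) :
    ((splits l).map fun q =>
        (unitS ((c1, C) : Q.Pth) : Series K Q) (Q.endV (k, q.1), q.2 ++ e :: q.1)).sum = 0 := by
  apply List.sum_eq_zero
  intro y hy
  obtain ⟨q, _, rfl⟩ := List.mem_map.mp hy
  apply unitS_apply_ne
  intro hcon
  have h2 : q.2 ++ e :: q.1 = C := by simpa using congrArg Prod.snd hcon
  exact hC (h2 ▸ List.mem_append.mpr (Or.inr (List.mem_cons_self)))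

theorem lsum_add3 {α : Type} (l : List α) (f g h : α → K) :
    (l.map fun y => f y + g y + h y).sum = (l.map f).sum + (l.map g).sum + (l.map h).sum := by
  rw [show (fun y => f y + g y + h y) = fun y => (f y + g y) + h y from rfl,
    Series.lsum_add l (fun y => f y + g y) h, Series.lsum_add l f g]

end SeriesLemmas

namespace Torus

open Series

def A3 : Fin 6 → List (Fin 6)
  | 0 => [] | 1 => [] | 2 => [0] | 3 => [1] | 4 => [0, 2] | 5 => [1, 3]
def B3 : Fin 6 → List (Fin 6)
  | 0 => [2, 4] | 1 => [3, 5] | 2 => [4] | 3 => [5] | 4 => [] | 5 => []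
def oth : Fin 6 → List (Fin 6)
  | 0 => [1, 3, 5] | 2 => [1, 3, 5] | 4 => [1, 3, 5]
  | 1 => [0, 2, 4] | 3 => [0, 2, 4] | 5 => [0, 2, 4]
def A6 : Fin 6 → List (Fin 6)
  | 0 => [1, 2, 5] | 1 => [] | 2 => [1] | 3 => [1, 2, 5, 0] | 4 => [1, 2, 5, 0, 3] | 5 => [1, 2]
def B6 : Fin 6 → List (Fin 6)
  | 0 => [3, 4] | 1 => [2, 5, 0, 3, 4] | 2 => [5, 0, 3, 4] | 3 => [4] | 4 => [] | 5 => [0, 3, 4]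

theorem g_nmem_A3 : ∀ g : Fin 6, g ∉ A3 g := by decide
theorem g_nmem_B3 : ∀ g : Fin 6, g ∉ B3 g := by decide
theorem g_nmem_oth : ∀ g : Fin 6, g ∉ oth g := by decide
theorem g_nmem_A6 : ∀ g : Fin 6, g ∉ A6 g := by decide
theorem g_nmem_B6 : ∀ g : Fin 6, g ∉ B6 g := by decide
theorem B3A3 : ∀ g : Fin 6, B3 g ++ A3 g = sL g := by decide
theorem B6A6 : ∀ g : Fin 6, B6 g ++ A6 g = lL g := by decide
theorem endV_B3 : ∀ g : Fin 6, torusQ.endV (torusQ.t g, B3 g) = 0 := by decide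
theorem endV_B6 : ∀ g : Fin 6, torusQ.endV (torusQ.t g, B6 g) = 0 := by decide
theorem sL_ne_lL : ∀ g : Fin 6, sL g ≠ lL g := by decide

variable {K : Type} [Field K]

theorem torusS_eq (x : K) (g : Fin 6) :
    torusS K x = unitS ((0 : Fin 3), A3 g ++ g :: B3 g) + unitS ((0 : Fin 3), oth g)
      + x • unitS ((0 : Fin 3), A6 g ++ g :: B6 g) := by
  fin_cases g <;>
    simp only [torusS, torusCyc1, torusCyc2, torusCyc6, A3, B3, oth, A6, B6,
      List.nil_append, List.cons_append] <;>
    abel!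

theorem cycDeriv_torus (x : K) (g : Fin 6) :
    cycDeriv (torusS K x) g
      = (unitS (torusQ.t g, sL g) + x • unitS (torusQ.t g, lL g) : Series K torusQ) := by
  funext p
  obtain ⟨k, l⟩ := p
  by_cases h : torusQ.WF (k, l) ∧ k = torusQ.t g
  · obtain ⟨hwf, hk⟩ := h
    subst hk
    unfold cycDeriv
    rw [if_pos ⟨hwf, rfl⟩]
    dsimp only
    rw [torusS_eq x g]
    simp only [Series.add_apply, Series.smul_apply]
    erw [lsum_add3, Series.lsum_mul_left,
      helper_occ (Q := torusQ) (torusQ.t g) 0 (A3 g) (B3 g) g (g_nmem_A3 g) (g_nmem_B3 g) l,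
      helper_no_occ (Q := torusQ) (torusQ.t g) 0 (oth g) g (g_nmem_oth g) l,
      helper_occ (Q := torusQ) (torusQ.t g) 0 (A6 g) (B6 g) g (g_nmem_A6 g) (g_nmem_B6 g) l,
      endV_B3 g, B3A3 g, endV_B6 g, B6A6 g]
    have hne : sL g ≠ lL g := sL_ne_lL g
    by_cases hs : l = sL g
    · have h2 : ¬((0 : Fin 3) = 0 ∧ l = lL g) := by rintro ⟨-, h2⟩; exact hne (hs ▸ h2)
      have h3 : ((torusQ.t g, l) : torusQ.Pth) ≠ (torusQ.t g, lL g) := by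
        intro hcon
        exact hne (hs ▸ (show l = lL g by simpa using congrArg Prod.snd hcon))
      rw [if_pos ⟨rfl, hs⟩, if_neg h2]
      show _ = unitS (torusQ.t g, sL g) (torusQ.t g, l) + x * unitS (torusQ.t g, lL g) (torusQ.t g, l)
      erw [unitS_apply_eq (by rw [hs]), unitS_apply_ne h3]
      ring
    · have h2 : ¬((0 : Fin 3) = 0 ∧ l = sL g) := by rintro ⟨-, h⟩; exact hs h
      have h3 : ((torusQ.t g, l) : torusQ.Pth) ≠ (torusQ.t g, sL g) := by
        intro hcon; exact hs (by simpa using congrArg Prod.snd hcon)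
      rw [if_neg h2]
      show _ = unitS (torusQ.t g, sL g) (torusQ.t g, l) + x * unitS (torusQ.t g, lL g) (torusQ.t g, l)
      erw [unitS_apply_ne h3]
      by_cases hl2 : l = lL g
      · rw [if_pos ⟨rfl, hl2⟩, unitS_apply_eq (by rw [hl2])]
        ring
      · have h4 : ¬((0 : Fin 3) = 0 ∧ l = lL g) := by rintro ⟨-, h⟩; exact hl2 h
        have h5 : ((torusQ.t g, l) : torusQ.Pth) ≠ (torusQ.t g, lL g) := by
          intro hcon; exact hl2 (by simpa using congrArg Prod.snd hcon)
        erw [if_neg h4, unitS_apply_ne h5]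
        ring
  · have h0 : cycDeriv (torusS K x) g (k, l) = 0 := by
      unfold cycDeriv; rw [if_neg h]
    have h1 : ((k, l) : torusQ.Pth) ≠ (torusQ.t g, sL g) := by
      intro hcon
      refine h ⟨?_, ?_⟩
      · rw [hcon]; exact wf_sL g
      · simpa using congrArg Prod.fst hcon
    have h2 : ((k, l) : torusQ.Pth) ≠ (torusQ.t g, lL g) := by
      intro hcon
      refine h ⟨?_, ?_⟩
      · rw [hcon]; exact wf_lL g
      · simpa using congrArg Prod.fst hcon
    rw [h0]
    show (0 : K) = unitS (torusQ.t g, sL g) (k, l) + x * unitS (torusQ.t g, lL g) (k, l)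
    erw [unitS_apply_ne h1, unitS_apply_ne h2]
    ring

end Torus

section WFSplit

variable {V : Type} {Q : Quiv V}

theorem wf_tail {i : V} {e : Q.E} {l : List Q.E} (h : Q.WF (i, e :: l)) : Q.WF (Q.t e, l) := by
  obtain ⟨hc, _⟩ := h
  rw [List.Chain', List.isChain_cons] at hc
  exact ⟨hc.2, fun f hf => (hc.1 f hf).symm⟩

theorem wf_split : ∀ (a : List Q.E) {i : V} {b : List Q.E}, Q.WF (i, a ++ b) →
    Q.WF (i, a) ∧ Q.WF (Q.endV (i, a), b) := by
  intro a
  induction a with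
  | nil => intro i b h; exact ⟨Quiv.wf_nil Q i, by simpa using h⟩
  | cons e a' ih =>
      intro i b h
      have hse : Q.s e = i := h.2 e rfl
      obtain ⟨h3, h4⟩ := ih (wf_tail h)
      constructor
      · refine ⟨h.1.prefix ⟨b, by simp⟩, ?_⟩
        intro f hf
        have hfe : e = f := by simpa using hf
        rw [← hfe]
        exact hse
      · rw [Quiv.endV_cons]
        exact h4

end WFSplit

section Jac

open Series

variable {K : Type} [Field K]

/-- the two-sided span generated by the cyclic derivatives of the torus potential -/
abbrev JJ (K : Type) [Field K] (x : K) : Set (pathAlg K torusQ) :=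
  twoSidedSpan (Set.range (cycDerivPA (torusSPA K x)))

theorem JJ_zero (x : K) : 0 ∈ JJ K x := ⟨[], by simp, by simp⟩

theorem JJ_add {x : K} {u v : pathAlg K torusQ} (hu : u ∈ JJ K x) (hv : v ∈ JJ K x) :
    u + v ∈ JJ K x := by
  obtain ⟨l1, hm1, hs1⟩ := hu
  obtain ⟨l2, hm2, hs2⟩ := hv
  refine ⟨l1 ++ l2, ?_, ?_⟩
  · intro q hq
    rcases List.mem_append.mp hq with h | h
    · exact hm1 q h
    · exact hm2 q h
  · rw [List.map_append, List.sum_append, hs1, hs2]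

theorem JJ_smul {x : K} (c : K) {u : pathAlg K torusQ} (hu : u ∈ JJ K x) :
    c • u ∈ JJ K x := by
  obtain ⟨l, hm, hs⟩ := hu
  refine ⟨l.map fun q => (c • q.1, q.2.1, q.2.2), ?_, ?_⟩
  · intro q hq
    obtain ⟨r, hr, rfl⟩ := List.mem_map.mp hq
    exact hm r hr
  · rw [List.map_map]
    have : ((fun q : pathAlg K torusQ × pathAlg K torusQ × pathAlg K torusQ =>
        q.1 * q.2.1 * q.2.2) ∘ fun q => (c • q.1, q.2.1, q.2.2))
        = fun q : pathAlg K torusQ × pathAlg K torusQ × pathAlg K torusQ =>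
            c • (q.1 * q.2.1 * q.2.2) := by
      funext q
      show (c • q.1) * q.2.1 * q.2.2 = _
      rw [smul_mul_assoc, smul_mul_assoc]
    rw [this]
    calc (l.map fun q => c • (q.1 * q.2.1 * q.2.2)).sum
        = ((l.map fun q => q.1 * q.2.1 * q.2.2).map fun y => c • y).sum := by
          rw [List.map_map]; rfl
      _ = c • u := by rw [← List.smul_sum, hs]

theorem JJ_gen (x : K) (a b : pathAlg K torusQ) (e : Fin 6) :
    a * cycDerivPA (torusSPA K x) e * b ∈ JJ K x := by
  refine ⟨[(a, cycDerivPA (torusSPA K x) e, b)], ?_, by simp⟩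
  intro q hq
  rw [List.mem_singleton] at hq
  subst hq
  exact ⟨e, rfl⟩

open Torus

theorem unpack_s (i : Fin 3) (u v : List (Fin 6)) (g : Fin 6)
    (h : torusQ.WF (i, u ++ sL g ++ v)) :
    torusQ.WF (i, u) ∧ torusQ.endV (i, u) = torusQ.t g ∧ torusQ.WF (torusQ.s g, v) := by
  rw [List.append_assoc] at h
  obtain ⟨hu, hrest⟩ := wf_split (Q := torusQ) u h
  have he : torusQ.endV (i, u) = torusQ.t g := by
    have h2 : torusQ.s (g + 2) = torusQ.endV (i, u) := hrest.2 (g + 2) rfl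
    rw [← h2, s_sL_head]
  obtain ⟨-, hv⟩ := wf_split (Q := torusQ) (sL g) hrest
  rw [he, endV_sL] at hv
  exact ⟨hu, he, hv⟩

theorem unpack_l (i : Fin 3) (u v : List (Fin 6)) (g : Fin 6)
    (h : torusQ.WF (i, u ++ lL g ++ v)) :
    torusQ.WF (i, u) ∧ torusQ.endV (i, u) = torusQ.t g ∧ torusQ.WF (torusQ.s g, v) := by
  rw [List.append_assoc] at h
  obtain ⟨hu, hrest⟩ := wf_split (Q := torusQ) u h
  have hhd : (lL g ++ v).head? = some (L0 g) := by rw [lL_eq g]; rfl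
  have he : torusQ.endV (i, u) = torusQ.t g := by
    have h2 : torusQ.s (L0 g) = torusQ.endV (i, u) := hrest.2 (L0 g) hhd
    rw [← h2, s_lL_head]
  obtain ⟨-, hv⟩ := wf_split (Q := torusQ) (lL g) hrest
  rw [he, endV_lL] at hv
  exact ⟨hu, he, hv⟩

theorem keyRel (x : K) (i : Fin 3) (u v : List (Fin 6)) (g : Fin 6)
    (hu : torusQ.WF (i, u)) (he : torusQ.endV (i, u) = torusQ.t g)
    (hv : torusQ.WF (torusQ.s g, v)) :
    ∃ (hs : torusQ.WF (i, u ++ sL g ++ v)) (hl : torusQ.WF (i, u ++ lL g ++ v)),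
      (unitPA hs + x • unitPA hl : pathAlg K torusQ) ∈ JJ K x := by
  have hs : torusQ.WF (i, u ++ sL g ++ v) := by
    refine Quiv.WF.append (Quiv.WF.append hu ?_) ?_
    · rw [he]; exact wf_sL g
    · erw [Quiv.endV_append, he, endV_sL]; exact hv
  have hl : torusQ.WF (i, u ++ lL g ++ v) := by
    refine Quiv.WF.append (Quiv.WF.append hu ?_) ?_
    · rw [he]; exact wf_lL g
    · erw [Quiv.endV_append, he, endV_lL]; exact hv
  refine ⟨hs, hl, ?_⟩
  have heq : (unitPA hu : pathAlg K torusQ) * cycDerivPA (torusSPA K x) g * unitPA hv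
      = unitPA hs + x • unitPA hl := by
    apply Subtype.ext
    push_cast
    show (unitS (i, u) : Series K torusQ) * cycDeriv (torusS K x) g * unitS (torusQ.s g, v)
        = unitS (i, u ++ sL g ++ v) + x • unitS (i, u ++ lL g ++ v)
    rw [cycDeriv_torus x g, mul_add, add_mul, mul_smul_comm, smul_mul_assoc]
    congr 1
    · erw [show (unitS (torusQ.t g, sL g) : Series K torusQ) = unitS (torusQ.endV (i, u), sL g) by
        rw [he], unitS_mul_unitS,
        show (unitS ((torusQ.s g, v) : torusQ.Pth) : Series K torusQ)
          = unitS (torusQ.endV (i, u ++ sL g), v) by erw [Quiv.endV_append, he, endV_sL],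
        unitS_mul_unitS]
      rfl
    · congr 1
      erw [show (unitS (torusQ.t g, lL g) : Series K torusQ) = unitS (torusQ.endV (i, u), lL g) by
        rw [he], unitS_mul_unitS,
        show (unitS ((torusQ.s g, v) : torusQ.Pth) : Series K torusQ)
          = unitS (torusQ.endV (i, u ++ lL g), v) by erw [Quiv.endV_append, he, endV_lL],
        unitS_mul_unitS]
      rfl
  rw [← heq]
  exact JJ_gen x _ _ g

end Jac

section Comb

open Series Torus

variable {K : Type} [Field K]

namespace Torus

def altE : Fin 6 → Fin 6 | 0 => 3 | 1 => 2 | 2 => 5 | 3 => 4 | 4 => 1 | 5 => 0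
def gOf : Fin 6 → Fin 6 | 0 => 5 | 1 => 4 | 2 => 1 | 3 => 0 | 4 => 3 | 5 => 2

theorem sL_shift1 : ∀ p : Fin 6, sL (p + 4) = [p, p + 2] := by decide
theorem sL_shift2 : ∀ p : Fin 6, sL (p + 2) = [p + 4, p] := by decide
theorem factA1 : ∀ g f : Fin 6, torusQ.t (g + 4) = torusQ.s f → f ≠ g → f = L4 g + 2 := by
  delta torusQ; decide
theorem factA2 : ∀ g : Fin 6, L4 g + 4 ≠ L3 g := by decide
theorem factB1 : ∀ g p : Fin 6, torusQ.t p = torusQ.s (g + 2) → g ≠ p → L0 g = p + 2 := by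
  delta torusQ; decide
theorem factB2 : ∀ g p : Fin 6, torusQ.t p = torusQ.s (g + 2) → g ≠ p → L1 g ≠ p + 4 := by
  delta torusQ; decide
theorem fact_tri1 : ∀ e f : Fin 6, f ≠ e + 2 → f + 4 ≠ e := by decide
theorem fact_tri2 : ∀ e r : Fin 6, r ≠ e + 2 + 2 → r ≠ e + 4 := by decide
theorem factM1 : ∀ e : Fin 6, e + 2 + 2 = e + 4 := by decide
theorem factM2 : ∀ e : Fin 6, e + 2 + 2 + 2 = e := by decide
theorem factM3 : ∀ e : Fin 6, e + 2 ≠ L4 (e + 4) := by decide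
theorem fact_comp_unm : ∀ e f : Fin 6, torusQ.t e = torusQ.s f → f ≠ e + 2 → f = altE e := by
  delta torusQ; decide
theorem lL_gOf : ∀ f : Fin 6, lL (gOf f)
    = [f, altE f, altE (altE f), altE (altE (altE f)), altE (altE (altE (altE f)))] := by decide
theorem altE5 : ∀ f : Fin 6, altE (altE (altE (altE (altE f)))) = gOf f := by decide
theorem factU1 : ∀ g : Fin 6, altE g ≠ g + 2 := by decide

/-- a matched pair with unmatched-or-absent right junction, not flush right -/
def GA (w : List (Fin 6)) : Prop :=
  ∃ (u v : List (Fin 6)) (g f : Fin 6), w = u ++ sL g ++ f :: v ∧ f ≠ g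

/-- a matched pair with unmatched left junction -/
def GB (w : List (Fin 6)) : Prop :=
  ∃ (u v : List (Fin 6)) (g p : Fin 6), w = (u ++ [p]) ++ sL g ++ v ∧ g ≠ p

def G (w : List (Fin 6)) : Prop := GA w ∨ GB w

theorem GA.cons {w : List (Fin 6)} (e : Fin 6) (h : GA w) : GA (e :: w) := by
  obtain ⟨u, v, g, f, hw, hf⟩ := h
  exact ⟨e :: u, v, g, f, by rw [hw]; rfl, hf⟩

theorem GB.cons {w : List (Fin 6)} (e : Fin 6) (h : GB w) : GB (e :: w) := by
  obtain ⟨u, v, g, p, hw, hp⟩ := h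
  exact ⟨e :: u, v, g, p, by rw [hw]; rfl, hp⟩

theorem G.cons {w : List (Fin 6)} (e : Fin 6) (h : G w) : G (e :: w) := by
  rcases h with h | h
  · exact Or.inl (h.cons e)
  · exact Or.inr (h.cons e)

end Torus

theorem adj_comp {i : Fin 3} {w u v : List (Fin 6)} {a b : Fin 6} (h : torusQ.WF (i, w))
    (hw : w = u ++ a :: b :: v) : torusQ.t a = torusQ.s b := by
  have hinf : [a, b] <:+: w := ⟨u, v, by rw [hw]; simp⟩
  exact (List.isChain_cons_cons.mp (List.IsChain.infix h.1 hinf)).1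

theorem trichotomy : ∀ w : List (Fin 6),
    List.Chain' (fun e f => torusQ.t e = torusQ.s f) w →
    List.Chain' (fun e f : Fin 6 => f = e + 2) w
      ∨ List.Chain' (fun e f : Fin 6 => f ≠ e + 2) w ∨ G w := by
  intro w
  induction w with
  | nil => intro _; exact Or.inl List.isChain_nil
  | cons e w ih =>
      intro hch
      cases w with
      | nil => exact Or.inl (List.isChain_singleton e)
      | cons f rest =>
          have h1 := (List.isChain_cons_cons.mp hch).1
          have h2 := (List.isChain_cons_cons.mp hch).2
          rcases ih h2 with hM | hU | hG
          · by_cases hef : f = e + 2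
            · exact Or.inl (List.isChain_cons_cons.mpr ⟨hef, hM⟩)
            · cases rest with
              | nil =>
                  exact Or.inr (Or.inl (List.isChain_cons_cons.mpr ⟨hef, List.isChain_singleton f⟩))
              | cons r rest' =>
                  have hr : r = f + 2 := (List.isChain_cons_cons.mp hM).1
                  refine Or.inr (Or.inr (Or.inr ⟨[], rest', f + 4, e, ?_, fact_tri1 e f hef⟩))
                  rw [sL_shift1, hr]
                  simp
          · by_cases hef : f = e + 2
            · cases rest with
              | nil =>
                  exact Or.inl (List.isChain_cons_cons.mpr ⟨hef, List.isChain_singleton f⟩)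
              | cons r rest' =>
                  have hr : r ≠ f + 2 := (List.isChain_cons_cons.mp hU).1
                  refine Or.inr (Or.inr (Or.inl ⟨[], rest', e + 4, r, ?_, ?_⟩))
                  · rw [sL_shift1, hef]
                    simp
                  · exact fact_tri2 e r (by rw [← hef]; exact hr)
            · exact Or.inr (Or.inl (List.isChain_cons_cons.mpr ⟨hef, hU⟩))
          · exact Or.inr (Or.inr (hG.cons e))

theorem stepG (x : K) (i : Fin 3) (w : List (Fin 6)) (hw : torusQ.WF (i, w)) (hG : G w) :
    ∃ (w' : List (Fin 6)) (hw' : torusQ.WF (i, w')), w'.length = w.length + 3 ∧ G w' ∧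
      (unitPA hw + x • unitPA hw' : pathAlg K torusQ) ∈ JJ K x := by
  rcases hG with ⟨u, v, g, f, hw_eq, hf⟩ | ⟨u, v, g, p, hw_eq, hp⟩
  · subst hw_eq
    obtain ⟨hu, he, hv⟩ := unpack_s i u (f :: v) g hw
    obtain ⟨hs, hl, hmem⟩ := keyRel x i u (f :: v) g hu he hv
    refine ⟨u ++ lL g ++ f :: v, hl, ?_, ?_, hmem⟩
    · simp only [List.length_append, List.length_cons, lL_length, sL, List.length_nil]
      omega
    · right
      have hcomp : torusQ.t (g + 4) = torusQ.s f :=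
        adj_comp hw (show u ++ sL g ++ f :: v = (u ++ [g + 2]) ++ (g + 4) :: f :: v by
          simp [sL])
      have hf2 : f = L4 g + 2 := factA1 g f hcomp hf
      refine ⟨u ++ [L0 g, L1 g, L2 g], v, L4 g + 4, L3 g, ?_, factA2 g⟩
      rw [lL_eq g, hf2, sL_shift1]
      simp
  · subst hw_eq
    obtain ⟨hu, he, hv⟩ := unpack_s i (u ++ [p]) v g hw
    obtain ⟨hs, hl, hmem⟩ := keyRel x i (u ++ [p]) v g hu he hv
    refine ⟨(u ++ [p]) ++ lL g ++ v, hl, ?_, ?_, hmem⟩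
    · simp only [List.length_append, List.length_cons, lL_length, sL, List.length_nil]
      omega
    · left
      have hcomp : torusQ.t p = torusQ.s (g + 2) :=
        adj_comp hw (show (u ++ [p]) ++ sL g ++ v = u ++ p :: (g + 2) :: ((g + 4) :: v) by
          simp [sL])
      have hL0 : L0 g = p + 2 := factB1 g p hcomp hp
      refine ⟨u, [L2 g, L3 g, L4 g] ++ v, p + 4, L1 g, ?_, factB2 g p hcomp hp⟩
      rw [lL_eq g, sL_shift1, ← hL0]
      simp

theorem engine (x : K) : ∀ (k : ℕ) (i : Fin 3) (w : List (Fin 6)) (hw : torusQ.WF (i, w)),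
    G w → ∃ (w' : List (Fin 6)) (hw' : torusQ.WF (i, w')) (c : K),
      w.length + 3 * k ≤ w'.length ∧
      (unitPA hw - c • unitPA hw' : pathAlg K torusQ) ∈ JJ K x := by
  intro k
  induction k with
  | zero =>
      intro i w hw _
      exact ⟨w, hw, 1, by omega, by simpa using JJ_zero x⟩
  | succ n ih =>
      intro i w hw hG
      obtain ⟨w1, hw1, hlen1, hG1, hmem1⟩ := stepG x i w hw hG
      obtain ⟨w', hw', c, hlen2, hmem2⟩ := ih i w1 hw1 hG1
      refine ⟨w', hw', (-x) * c, by omega, ?_⟩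
      have hid : (unitPA hw - ((-x) * c) • unitPA hw' : pathAlg K torusQ)
          = (unitPA hw + x • unitPA hw1) + (-x) • (unitPA hw1 - c • unitPA hw') := by
        module
      rw [hid]
      exact JJ_add hmem1 (JJ_smul (-x) hmem2)

end Comb

section Init

open Series Torus

variable {K : Type} [Field K]

theorem move_unitPA {i : Fin 3} {w w2 : List (Fin 6)} (weq : w = w2)
    (hw : torusQ.WF (i, w)) (hw2 : torusQ.WF (i, w2)) :
    (unitPA hw : pathAlg K torusQ) = unitPA hw2 := by
  subst weq; rfl

theorem init (x : K) (hx : x ≠ 0) (i : Fin 3) (w : List (Fin 6)) (hw : torusQ.WF (i, w))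
    (h7 : 7 ≤ w.length) :
    ∃ (w1 : List (Fin 6)) (hw1 : torusQ.WF (i, w1)) (c : K), G w1 ∧
      (unitPA hw - c • unitPA hw1 : pathAlg K torusQ) ∈ JJ K x := by
  rcases trichotomy w hw.1 with hM | hU | hG
  · -- fully matched
    cases w with
    | nil => simp at h7
    | cons e w2 =>
    cases w2 with
    | nil => simp at h7
    | cons f w3 =>
    cases w3 with
    | nil => simp at h7
    | cons r w4 =>
    cases w4 with
    | nil => simp at h7
    | cons t rest =>
    obtain ⟨hf, hM⟩ := List.isChain_cons_cons.mp hM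
    obtain ⟨hr, hM⟩ := List.isChain_cons_cons.mp hM
    obtain ⟨ht, hM⟩ := List.isChain_cons_cons.mp hM
    subst ht; subst hr; subst hf
    have weq : e :: (e + 2) :: (e + 2 + 2) :: (e + 2 + 2 + 2) :: rest
        = [] ++ sL (e + 4) ++ ((e + 4) :: e :: rest) := by
      rw [factM2, factM1, sL_shift1]
      simp
    have hw2 : torusQ.WF (i, [] ++ sL (e + 4) ++ ((e + 4) :: e :: rest)) := by
      erw [← weq]; exact hw
    obtain ⟨hu, he, hv⟩ := unpack_s i [] ((e + 4) :: e :: rest) (e + 4) hw2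
    obtain ⟨hs, hl, hmem⟩ := keyRel x i [] ((e + 4) :: e :: rest) (e + 4) hu he hv
    refine ⟨[] ++ lL (e + 4) ++ ((e + 4) :: e :: rest), hl, -x, ?_, ?_⟩
    · right
      refine ⟨[L0 (e + 4), L1 (e + 4), L2 (e + 4), L3 (e + 4)], rest, e + 2, L4 (e + 4),
        ?_, factM3 e⟩
      rw [lL_eq, sL_shift2]
      simp
    · have h1 : (unitPA hw : pathAlg K torusQ) = unitPA hs := move_unitPA weq hw hs
      have hid : (unitPA hs - (-x) • unitPA hl : pathAlg K torusQ)
          = unitPA hs + x • unitPA hl := by module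
      rw [h1, hid]
      exact hmem
  · -- alternating
    cases w with
    | nil => simp at h7
    | cons f0 w2 =>
    cases w2 with
    | nil => simp at h7
    | cons f1 w3 =>
    cases w3 with
    | nil => simp at h7
    | cons f2 w4 =>
    cases w4 with
    | nil => simp at h7
    | cons f3 w5 =>
    cases w5 with
    | nil => simp at h7
    | cons f4 w6 =>
    cases w6 with
    | nil => simp at h7
    | cons v0 w7 =>
    cases w7 with
    | nil => simp at h7
    | cons v1 rest =>
    obtain ⟨c01, hc⟩ := List.isChain_cons_cons.mp hw.1
    obtain ⟨c12, hc⟩ := List.isChain_cons_cons.mp hc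
    obtain ⟨c23, hc⟩ := List.isChain_cons_cons.mp hc
    obtain ⟨c34, hc⟩ := List.isChain_cons_cons.mp hc
    obtain ⟨c45, hc⟩ := List.isChain_cons_cons.mp hc
    obtain ⟨c56, hc⟩ := List.isChain_cons_cons.mp hc
    obtain ⟨u01, hU⟩ := List.isChain_cons_cons.mp hU
    obtain ⟨u12, hU⟩ := List.isChain_cons_cons.mp hU
    obtain ⟨u23, hU⟩ := List.isChain_cons_cons.mp hU
    obtain ⟨u34, hU⟩ := List.isChain_cons_cons.mp hU
    obtain ⟨u45, hU⟩ := List.isChain_cons_cons.mp hU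
    obtain ⟨u56, hU⟩ := List.isChain_cons_cons.mp hU
    have e1 : f1 = altE f0 := fact_comp_unm f0 f1 c01 u01
    have e2 : f2 = altE f1 := fact_comp_unm f1 f2 c12 u12
    have e3 : f3 = altE f2 := fact_comp_unm f2 f3 c23 u23
    have e4 : f4 = altE f3 := fact_comp_unm f3 f4 c34 u34
    have e5 : v0 = altE f4 := fact_comp_unm f4 v0 c45 u45
    have e6 : v1 = altE v0 := fact_comp_unm v0 v1 c56 u56
    have hlLg : lL (gOf f0) = [f0, f1, f2, f3, f4] := by
      rw [e4, e3, e2, e1]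
      exact lL_gOf f0
    have hv0 : v0 = gOf f0 := by
      rw [e5, e4, e3, e2, e1]
      exact altE5 f0
    have weq : f0 :: f1 :: f2 :: f3 :: f4 :: v0 :: v1 :: rest
        = [] ++ lL (gOf f0) ++ (gOf f0 :: v1 :: rest) := by
      rw [hlLg, ← hv0]
      simp
    have hw2 : torusQ.WF (i, [] ++ lL (gOf f0) ++ (gOf f0 :: v1 :: rest)) := by
      erw [← weq]; exact hw
    obtain ⟨hu, he, hv⟩ := unpack_l i [] (gOf f0 :: v1 :: rest) (gOf f0) hw2
    obtain ⟨hs, hl, hmem⟩ := keyRel x i [] (gOf f0 :: v1 :: rest) (gOf f0) hu he hv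
    refine ⟨[] ++ sL (gOf f0) ++ (gOf f0 :: v1 :: rest), hs, -x⁻¹, ?_, ?_⟩
    · left
      refine ⟨[gOf f0 + 2], rest, gOf f0 + 2, v1, ?_, ?_⟩
      · rw [sL_shift2]
        simp [sL]
      · rw [e6, hv0]
        exact factU1 (gOf f0)
    · have h1 : (unitPA hw : pathAlg K torusQ) = unitPA hl := move_unitPA weq hw hl
      have hid : (unitPA hl - (-x⁻¹) • unitPA hs : pathAlg K torusQ)
          = x⁻¹ • (unitPA hs + x • unitPA hl) := by
        rw [smul_add, smul_smul, inv_mul_cancel₀ hx, one_smul, neg_smul, sub_neg_eq_add,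
          add_comm]
      rw [h1, hid]
      exact JJ_smul x⁻¹ hmem
  · exact ⟨w, hw, 1, hG, by simpa using JJ_zero x⟩

theorem master (x : K) (hx : x ≠ 0) (p : torusQ.Pth) (hp : torusQ.WF p)
    (h7 : 7 ≤ p.2.length) (n : ℕ) :
    ∃ (q : torusQ.Pth) (hq : torusQ.WF q) (c : K), n ≤ q.2.length ∧
      (unitPA hp - c • unitPA hq : pathAlg K torusQ) ∈ JJ K x := by
  obtain ⟨i, w⟩ := p
  obtain ⟨w1, hw1, c1, hG1, hmem1⟩ := init x hx i w hp h7
  obtain ⟨w', hw', c2, hlen, hmem2⟩ := engine x n i w1 hw1 hG1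
  refine ⟨(i, w'), hw', c1 * c2, show n ≤ w'.length by omega, ?_⟩
  have hid : (unitPA hp - (c1 * c2) • unitPA hw' : pathAlg K torusQ)
      = (unitPA hp - c1 • unitPA hw1) + c1 • (unitPA hw1 - c2 • unitPA hw') := by module
  rw [hid]
  exact JJ_add hmem1 (JJ_smul c1 hmem2)

end Init

section Final

open Series Torus

variable {K : Type} [Field K]

theorem series_sum_apply {ι : Type} (s : Finset ι) (f : ι → Series K torusQ)
    (p : torusQ.Pth) : (∑ i ∈ s, f i) p = ∑ i ∈ s, f i p := by
  classical
  induction s using Finset.induction_on with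
  | empty => rfl
  | insert _ _ hni ih =>
      rw [Finset.sum_insert hni, Finset.sum_insert hni, Series.add_apply, ih]

theorem coe_sub_smul (a b : pathAlg K torusQ) (cc : K) :
    ((a - cc • b : pathAlg K torusQ) : Series K torusQ)
      = (a : Series K torusQ) - cc • (b : Series K torusQ) := by
  push_cast
  rfl

theorem coe_sub' (a b : pathAlg K torusQ) :
    ((a - b : pathAlg K torusQ) : Series K torusQ)
      = (a : Series K torusQ) - (b : Series K torusQ) := by
  push_cast
  rfl

theorem coe_pa_sum {ι : Type} (s : Finset ι) (f : ι → pathAlg K torusQ) :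
    ((∑ i ∈ s, f i : pathAlg K torusQ) : Series K torusQ)
      = ∑ i ∈ s, ((f i : pathAlg K torusQ) : Series K torusQ) := by
  classical
  induction s using Finset.induction_on with
  | empty => rfl
  | insert _ _ hni ih =>
      rw [Finset.sum_insert hni, Finset.sum_insert hni, ← ih]
      push_cast
      rfl

theorem mem_listsUpTo : ∀ (n : ℕ) (l : List (Fin 6)), l ∈ listsUpTo n ↔ l.length ≤ n := by
  intro n
  induction n with
  | zero =>
      intro l
      cases l with
      | nil => simp [listsUpTo]
      | cons e l' => simp [listsUpTo]
  | succ n ih =>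
      intro l
      cases l with
      | nil => simp [listsUpTo]
      | cons e l' =>
          show e :: l' ∈ {[]} ∪ (Finset.univ ×ˢ listsUpTo n).image (fun q => q.1 :: q.2) ↔ _
          rw [Finset.mem_union, Finset.mem_image]
          constructor
          · rintro (h | ⟨q, hq, hql⟩)
            · simp at h
            · have h2 : q.2 = l' := (List.cons.injEq .. ▸ hql).2
              have h3 := (ih q.2).mp (Finset.mem_product.mp hq).2
              rw [h2] at h3
              simp only [List.length_cons]
              omega
          · intro hlen
            right
            refine ⟨(e, l'), ?_, rfl⟩
            rw [Finset.mem_product]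
            refine ⟨Finset.mem_univ e, (ih l').mpr ?_⟩
            simp only [List.length_cons] at hlen
            omega

theorem mem_torusPathsUpTo (n : ℕ) (p : torusQ.Pth) :
    p ∈ torusPathsUpTo n ↔ p.2.length ≤ n := by
  obtain ⟨i, l⟩ := p
  erw [torusPathsUpTo, Finset.mem_product]
  simp [mem_listsUpTo n l]
  rfl

end Final

end QPF

open QPF in
/-- In the quiver with potential of the canonical triangulation of the
once-punctured torus, every path of length at least `7` lies in the Jacobian ideal
`J(S)`; consequently the Jacobian algebra `P(Q,S)` is spanned by the residues of the
paths of length at most `6`. -/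
theorem torus_paths_of_length_seven_in_jacobian_ideal
    {K : Type} [Field K] (x : K) (hx : x ≠ 0) :
    (∀ (p : torusQ.Pth) (hp : torusQ.WF p), 7 ≤ p.2.length →
      unitPA (K := K) hp ∈ jacobSet (torusSPA K x)) ∧
    ∀ u : pathAlg K torusQ, ∃ c : torusQ.Pth → K,
      (∀ p : torusQ.Pth, ¬ torusQ.WF p → c p = 0) ∧
      ∃ w ∈ jacobSet (torusSPA K x),
        (u : Series K torusQ)
          = (∑ p ∈ torusPathsUpTo 6, c p • unitS p) + (w : Series K torusQ) := by
  classical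
  constructor
  · intro p hp h7
    intro n
    obtain ⟨q, hq, cc, hqlen, hmem⟩ := master x hx p hp h7 n
    refine ⟨unitPA hp - cc • unitPA hq, hmem, ?_⟩
    intro p' hl
    rw [coe_sub_smul]
    show (unitS p : Series K torusQ) p'
        = ((unitS p : Series K torusQ) - cc • (unitS q : Series K torusQ)) p'
    rw [Series.sub_apply, Series.smul_apply,
      unitS_apply_ne (show p' ≠ q from fun hcon => by rw [hcon] at hl; omega), mul_zero,
      sub_zero]
  · intro u
    set cf : torusQ.Pth → K := fun p => if torusQ.WF p then (u : Series K torusQ) p else 0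
      with hcf
    have hc0 : ∀ p : torusQ.Pth, ¬ torusQ.WF p → cf p = 0 := fun p h => if_neg h
    have hmemS : (∑ p ∈ torusPathsUpTo 6, cf p • unitS p : Series K torusQ)
        ∈ pathAlg K torusQ := by
      refine sum_mem ?_
      intro p _
      by_cases hwf : torusQ.WF p
      · exact Subalgebra.smul_mem _ (unitS_mem hwf) _
      · rw [hc0 p hwf, zero_smul]
        exact zero_mem _
    set SumP : pathAlg K torusQ := ⟨_, hmemS⟩ with hSumP
    set wP : pathAlg K torusQ := u - SumP with hwP
    have hsum_eval : ∀ p' : torusQ.Pth,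
        (∑ p ∈ torusPathsUpTo 6, cf p • unitS p : Series K torusQ) p'
          = if p'.2.length ≤ 6 then cf p' else 0 := by
      intro p'
      rw [series_sum_apply]
      by_cases h6 : p'.2.length ≤ 6
      · rw [if_pos h6, Finset.sum_eq_single p']
        · show cf p' * (unitS p' : Series K torusQ) p' = cf p'
          rw [unitS_apply_eq rfl, mul_one]
        · intro q _ hne
          show cf q * (unitS q : Series K torusQ) p' = 0
          rw [unitS_apply_ne (Ne.symm hne), mul_zero]
        · intro hnm
          exact absurd ((mem_torusPathsUpTo 6 p').mpr h6) hnm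
      · rw [if_neg h6]
        refine Finset.sum_eq_zero ?_
        intro q hq
        have hlen := (mem_torusPathsUpTo 6 q).mp hq
        show cf q * (unitS q : Series K torusQ) p' = 0
        rw [unitS_apply_ne (show p' ≠ q from fun hcon => h6 (by rw [hcon]; exact hlen)),
          mul_zero]
    have hwv : (wP : Series K torusQ) = (u : Series K torusQ)
        - (∑ p ∈ torusPathsUpTo 6, cf p • unitS p : Series K torusQ) := by
      rw [hwP, coe_sub']
    have hw0 : ∀ p' : torusQ.Pth, p'.2.length < 7 → (wP : Series K torusQ) p' = 0 := by
      intro p' h6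
      rw [hwv, Series.sub_apply, hsum_eval p', if_pos (by omega)]
      by_cases hwf : torusQ.WF p'
      · have : cf p' = (u : Series K torusQ) p' := if_pos hwf
        rw [this, sub_self]
      · rw [mem_pathAlg_iff.mp u.2 p' hwf, hc0 p' hwf, sub_self]
    have hwJ : wP ∈ jacobSet (torusSPA K x) := by
      intro n
      have key : ∀ p : torusQ.Pth, ∃ d : pathAlg K torusQ,
          (torusQ.WF p ∧ 7 ≤ p.2.length) →
            d ∈ JJ K x ∧ ∀ p' : torusQ.Pth, p'.2.length < n →
              (d : Series K torusQ) p' = (unitS p : Series K torusQ) p' := by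
        intro p
        by_cases h : torusQ.WF p ∧ 7 ≤ p.2.length
        · obtain ⟨q, hq, cc, hql, hmem⟩ := master x hx p h.1 h.2 n
          refine ⟨unitPA h.1 - cc • unitPA hq, fun _ => ⟨hmem, ?_⟩⟩
          intro p' hl
          rw [coe_sub_smul]
          show ((unitS p : Series K torusQ)
              - cc • (unitS q : Series K torusQ)) p' = _
          rw [Series.sub_apply, Series.smul_apply,
            unitS_apply_ne (show p' ≠ q from fun hcon => by rw [hcon] at hl; omega),
            mul_zero, sub_zero]
        · exact ⟨0, fun hcon => absurd hcon h⟩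
      choose d hd using key
      set F := (torusPathsUpTo n).filter (fun p => 7 ≤ p.2.length) with hF
      refine ⟨∑ p ∈ F, if h : torusQ.WF p ∧ 7 ≤ p.2.length
          then ((wP : Series K torusQ) p) • d p else 0, ?_, ?_⟩
      · refine Finset.sum_induction _ (· ∈ JJ K x) (fun a b ha hb => JJ_add ha hb)
          (JJ_zero x) ?_
        intro p _
        by_cases h : torusQ.WF p ∧ 7 ≤ p.2.length
        · rw [dif_pos h]
          exact JJ_smul _ (hd p h).1
        · rw [dif_neg h]
          exact JJ_zero x
      · intro p' hl
        rw [coe_pa_sum, series_sum_apply]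
        have hterm : ∀ p ∈ F,
            (((if h : torusQ.WF p ∧ 7 ≤ p.2.length
              then ((wP : Series K torusQ) p) • d p else 0 : pathAlg K torusQ))
                : Series K torusQ) p'
            = if p' = p then (wP : Series K torusQ) p else 0 := by
          intro p hpF
          by_cases h : torusQ.WF p ∧ 7 ≤ p.2.length
          · rw [dif_pos h, Subalgebra.coe_smul, Series.smul_apply, (hd p h).2 p' hl]
            by_cases hpp : p' = p
            · rw [if_pos hpp, unitS_apply_eq hpp, mul_one]
            · rw [if_neg hpp, unitS_apply_ne hpp, mul_zero]
          · rw [dif_neg h, ZeroMemClass.coe_zero, Series.zero_apply]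
            have h7p : 7 ≤ p.2.length := (Finset.mem_filter.mp hpF).2
            have hwfp : ¬ torusQ.WF p := fun hw => h ⟨hw, h7p⟩
            by_cases hpp : p' = p
            · rw [if_pos hpp, mem_pathAlg_iff.mp wP.2 p hwfp]
            · rw [if_neg hpp]
        rw [Finset.sum_congr rfl hterm]
        by_cases hP : torusQ.WF p' ∧ 7 ≤ p'.2.length
        · have hmemF : p' ∈ F := by
            rw [hF, Finset.mem_filter, mem_torusPathsUpTo]
            exact ⟨by omega, hP.2⟩
          have hz : ∀ q ∈ F, q ≠ p' →
              (if p' = q then (wP : Series K torusQ) q else 0) = 0 := by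
            intro q _ hne
            rw [if_neg (fun hcon => hne hcon.symm)]
          rw [Finset.sum_eq_single_of_mem p' hmemF hz, if_pos rfl]
        · have hz : ∀ q ∈ F, (if p' = q then (wP : Series K torusQ) q else 0) = 0 := by
            intro q hqF
            by_cases hpp : p' = q
            · have h7p : 7 ≤ q.2.length := (Finset.mem_filter.mp hqF).2
              have hnw : ¬ torusQ.WF p' := fun hw => hP ⟨hw, by rw [hpp]; exact h7p⟩
              rw [if_pos hpp, ← hpp]
              exact mem_pathAlg_iff.mp wP.2 p' hnw
            · rw [if_neg hpp]
          rw [Finset.sum_eq_zero hz]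
          rcases not_and_or.mp hP with hnw | hn7
          · exact mem_pathAlg_iff.mp wP.2 p' hnw
          · exact hw0 p' (by omega)
    refine ⟨cf, hc0, wP, hwJ, ?_⟩
    rw [hwv]
    abel
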